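/- arXiv:1805.05149 — 2 statements merged into one kernel-verified Lean document; each statement's English description precedes it below -/
import Mathlib

section
/- Let G be a simple graph on n ≥ 3 vertices such that deg_G(u) + deg_G(v) ≥ n for every pair of distinct nonadjacent vertices u, v. Then either G − e is hamiltonian for every edge e of G (G is 1-edge-fault hamiltonian), or G is isomorphic to K₃, or the vertex set of G can be partitioned into {a, b} ∪ S ∪ T with |S| = s ∈ {1, 2}, |T| = t ≥ 1, s + t = n − 2, such that S induces a complete graph, T induces a complete graph, there are no edges between S and T, and both a and b are adjacent to every vertex of S ∪ T (a and b may or may not be adjacent to each other). -/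
open SimpleGraph List

set_option linter.unusedVariables false
set_option linter.unusedSectionVars false
set_option maxHeartbeats 1600000

/-- The degree of a vertex: the number of its neighbors. -/
noncomputable def deg {α : Type*} (G : SimpleGraph α) (v : α) : ℕ :=
  (G.neighborSet v).ncard

/-- The join of two (disjoint) graphs: both graphs together with all cross edges. -/
def gJoin {α β : Type*} (G : SimpleGraph α) (H : SimpleGraph β) : SimpleGraph (α ⊕ β) where
  Adj u v := match u, v with
    | Sum.inl a, Sum.inl b => G.Adj a b
    | Sum.inr a, Sum.inr b => H.Adj a b
    | _, _ => True
  symm := by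
    constructor
    rintro (a | a) (b | b) h
    · exact G.adj_symm h
    · trivial
    · trivial
    · exact H.adj_symm h
  loopless := by
    constructor
    rintro (a | a) h
    · exact G.loopless.irrefl a h
    · exact H.loopless.irrefl a h

/-- `kK2 k` : the disjoint union of `k` copies of `K₂`. -/
def kK2 (k : ℕ) : SimpleGraph (Fin k × Fin 2) where
  Adj p q := p.1 = q.1 ∧ p.2 ≠ q.2
  symm := ⟨fun p q h => ⟨h.1.symm, h.2.symm⟩⟩
  loopless := ⟨fun p h => h.2 rfl⟩

/-- `G − F`: the subgraph of `G` induced on the complement of the vertex set `F`. -/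
def delVerts {W : Type*} [Fintype W] [DecidableEq W] (G : SimpleGraph W) (F : Finset W) :
    SimpleGraph ((Fᶜ : Finset W) : Set W) :=
  G.induce ((Fᶜ : Finset W) : Set W)

namespace OreFT
variable {V : Type*} [Fintype V] [DecidableEq V]

/-- Build a walk from a chain. -/
def mkWalk (G : SimpleGraph V) : (a : V) → (t : List V) → List.IsChain G.Adj (a :: t) →
    G.Walk a ((a :: t).getLast (List.cons_ne_nil a t))
  | a, [], _ => (Walk.nil : G.Walk a a).copy rfl (by simp)
  | a, b :: t, h =>
    ((Walk.cons (List.rel_of_chain_cons h) (mkWalk G b t (List.IsChain.of_cons h)))).copy rfl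
      (by simp [List.getLast_cons])

@[simp] lemma mkWalk_support (G : SimpleGraph V) (a : V) (t : List V) (h : List.IsChain G.Adj (a :: t)) :
    (mkWalk G a t h).support = a :: t := by
  induction t generalizing a with
  | nil => simp [mkWalk]
  | cons b t ih => simp [mkWalk, ih]

lemma mkWalk_edge_head (G : SimpleGraph V) (a : V) (t : List V) (h : List.IsChain G.Adj (a :: t))
    (hnd : (a :: t).Nodup) (b : V) (hb : s(b, a) ∈ (mkWalk G a t h).edges) :
    t.head? = some b := by
  induction t generalizing a with
  | nil => simp [mkWalk] at hb
  | cons c t ih =>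
    simp only [mkWalk, Walk.edges_copy, Walk.edges_cons, List.mem_cons] at hb
    rcases hb with hb | hb
    · rw [Sym2.eq_iff] at hb
      rcases hb with ⟨rfl, h2⟩ | ⟨rfl, -⟩
      · exact absurd h2 (by simp only [List.nodup_cons, List.mem_cons] at hnd; tauto)
      · rfl
    · exfalso
      have : a ∈ (mkWalk G c t (List.IsChain.of_cons h)).support :=
        Walk.snd_mem_support_of_mem_edges _ hb
      rw [mkWalk_support] at this
      simp only [List.nodup_cons] at hnd
      exact hnd.1 this

/-- A nodup list covering all vertices, forming a chain with a wrap-around edge, witnesses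
hamiltonicity. -/
lemma isHam_of_list (G : SimpleGraph V) (c : List V) (h1 : c.IsChain G.Adj) (h2 : c.Nodup)
    (h3 : ∀ v : V, v ∈ c) (hlen : 3 ≤ c.length)
    (hwrap : ∀ a ∈ c.head?, ∀ b ∈ c.getLast?, G.Adj b a) : G.IsHamiltonian := by
  intro _
  obtain ⟨a, t, rfl⟩ := List.exists_cons_of_ne_nil (show c ≠ [] by rintro rfl; simp at hlen)
  have htne : t ≠ [] := by rintro rfl; simp at hlen
  have hch : List.IsChain G.Adj (a :: t) := h1
  set lastv := (a :: t).getLast (List.cons_ne_nil a t) with hlv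
  have hlast? : (a :: t).getLast? = some lastv := by
    rw [List.getLast?_eq_getLast (List.cons_ne_nil a t)]
  have hadj : G.Adj lastv a := hwrap a rfl lastv hlast?
  set r := mkWalk G a t hch with hr
  have hpath : r.IsPath := by rw [Walk.isPath_def, hr, mkWalk_support]; exact h2
  have he : s(lastv, a) ∉ r.edges := by
    intro hmem
    have hhd : t.head? = some lastv := mkWalk_edge_head G a t hch h2 lastv hmem
    obtain ⟨b, t2, rfl⟩ := List.exists_cons_of_ne_nil htne
    have hb : b = lastv := by simpa using hhd
    have ht2ne : t2 ≠ [] := by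
      rintro rfl
      simp only [List.length_cons, List.length_nil] at hlen
      omega
    have hlv2 : lastv = t2.getLast ht2ne := by
      rw [hlv, List.getLast_cons (List.cons_ne_nil b t2), List.getLast_cons ht2ne]
    have hmem2 : b ∈ t2 := by rw [hb, hlv2]; exact List.getLast_mem ht2ne
    simp only [List.nodup_cons, List.mem_cons] at h2
    exact h2.2.1 hmem2
  have hcyc : (Walk.cons hadj r).IsCycle := (Walk.cons_isCycle_iff r hadj).2 ⟨hpath, he⟩
  refine ⟨lastv, Walk.cons hadj r, hcyc, fun w => ?_⟩
  have hsupp : (Walk.cons hadj r).tail.support = a :: t := by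
    rw [Walk.support_tail_of_not_nil _ (by simp), Walk.support_cons, hr, mkWalk_support]
    simp
  rw [hsupp]
  exact List.count_eq_one_of_mem h2 (h3 w)



lemma deg_eq_card (G : SimpleGraph V) (v : V) :
    deg G v = (G.neighborSet v).toFinite.toFinset.card :=
  Set.ncard_eq_toFinset_card _ _

lemma cover_length (l : List V) (hnd : l.Nodup) (hcov : ∀ v : V, v ∈ l) :
    l.length = Fintype.card V := by
  classical
  have h1 : l.toFinset = Finset.univ := by ext v; simp [hcov v]
  have h2 : l.toFinset.card = l.length := List.toFinset_card_of_nodup hnd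
  rw [← h2, h1, Finset.card_univ]

lemma head_ne_last (l : List V) (hnd : l.Nodup) (hlen : 2 ≤ l.length) (u w : V)
    (hu : l.head? = some u) (hw : l.getLast? = some w) : u ≠ w := by
  obtain ⟨a, t, rfl⟩ := List.exists_cons_of_ne_nil (show l ≠ [] by rintro rfl; simp at hlen)
  have htne : t ≠ [] := by rintro rfl; simp at hlen
  have hu' : u = a := by simpa using hu.symm
  have hw' : w = t.getLast htne := by
    rw [List.getLast?_eq_getLast (List.cons_ne_nil a t), List.getLast_cons htne] at hw
    simpa using hw.symm
  subst hu' hw'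
  intro h
  simp only [List.nodup_cons] at hnd
  exact hnd.1 (h ▸ List.getLast_mem htne)

lemma lemCross (G₀ : SimpleGraph V) (q : List V) (hch : q.IsChain G₀.Adj) (hnd : q.Nodup)
    (u w : V) (hu : q.head? = some u) (hw : q.getLast? = some w)
    (hNu : ∀ z, G₀.Adj u z → z ∈ q) (hNw : ∀ z, G₀.Adj w z → z ∈ q)
    (hcard : q.length ≤ deg G₀ u + deg G₀ w) :
    ∃ l1 l2 a' b', q = l1 ++ l2 ∧ l1 ≠ [] ∧ l2 ≠ [] ∧ l1.getLast? = some a' ∧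
      l2.head? = some b' ∧ G₀.Adj w a' ∧ G₀.Adj u b' := by
  classical
  have hqne : q ≠ [] := by rintro rfl; simp at hu
  set m := q.length with hm
  have hm1 : 0 < m := List.length_pos_iff.2 hqne
  have hidx_lt : ∀ z, z ∈ q → q.idxOf z < m := fun z hz => List.idxOf_lt_length_iff.2 hz
  have hget : ∀ z (hz : z ∈ q), q[q.idxOf z]'(hidx_lt z hz) = z :=
    fun z hz => List.getElem_idxOf (hidx_lt z hz)
  have hgetE : ∀ z (hz : z ∈ q), q[q.idxOf z]? = some z := by
    intro z hz
    rw [List.getElem?_eq_getElem (hidx_lt z hz), hget z hz]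
  have hidx_pos : ∀ z, z ∈ q → z ≠ u → 1 ≤ q.idxOf z := by
    intro z hz hzu
    obtain ⟨a, t, rfl⟩ := List.exists_cons_of_ne_nil hqne
    have ha : a = u := by simpa using hu
    subst ha
    rw [List.idxOf_cons_ne _ (Ne.symm hzu)]
    omega
  have hlast_getElem : q[m-1]? = some w := by
    rw [← List.getLast?_eq_getElem?] at *; exact hw
  have hidx_ne_last : ∀ z, z ∈ q → z ≠ w → q.idxOf z ≠ m - 1 := by
    intro z hz hzw he
    have h2 : q[m-1]? = some z := by rw [← he]; exact hgetE z hz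
    rw [hlast_getElem] at h2
    have h3 : w = z := by injection h2
    exact hzw h3.symm
  set A := (G₀.neighborSet u).toFinite.toFinset.image (fun z => q.idxOf z - 1) with hA
  set B := (G₀.neighborSet w).toFinite.toFinset.image (fun z => q.idxOf z) with hB
  have hmemu : ∀ z, z ∈ (G₀.neighborSet u).toFinite.toFinset → G₀.Adj u z := by
    intro z hz; rw [Set.Finite.mem_toFinset] at hz; exact hz
  have hmemw : ∀ z, z ∈ (G₀.neighborSet w).toFinite.toFinset → G₀.Adj w z := by
    intro z hz; rw [Set.Finite.mem_toFinset] at hz; exact hz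
  have hAcard : A.card = deg G₀ u := by
    rw [deg_eq_card, hA]
    apply Finset.card_image_of_injOn
    intro z1 h1 z2 h2 he
    have a1 := hmemu z1 h1; have a2 := hmemu z2 h2
    have m1 : z1 ∈ q := hNu z1 a1; have m2 : z2 ∈ q := hNu z2 a2
    have p1 : 1 ≤ q.idxOf z1 := hidx_pos z1 m1 a1.ne'
    have p2 : 1 ≤ q.idxOf z2 := hidx_pos z2 m2 a2.ne'
    have : q.idxOf z1 = q.idxOf z2 := by simp only at he; omega
    rw [← hget z1 m1, ← hget z2 m2]
    simp only [this]
  have hBcard : B.card = deg G₀ w := by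
    rw [deg_eq_card, hB]
    apply Finset.card_image_of_injOn
    intro z1 h1 z2 h2 he
    have m1 : z1 ∈ q := hNw z1 (hmemw z1 h1); have m2 : z2 ∈ q := hNw z2 (hmemw z2 h2)
    simp only at he
    rw [← hget z1 m1, ← hget z2 m2]
    simp only [he]
  have hAsub : A ⊆ Finset.range (m - 1) := by
    intro j hj
    rw [hA, Finset.mem_image] at hj
    obtain ⟨z, hz, rfl⟩ := hj
    have a1 := hmemu z hz
    have m1 : z ∈ q := hNu z a1
    have := hidx_lt z m1
    have := hidx_pos z m1 a1.ne'
    rw [Finset.mem_range]; omega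
  have hBsub : B ⊆ Finset.range (m - 1) := by
    intro j hj
    rw [hB, Finset.mem_image] at hj
    obtain ⟨z, hz, rfl⟩ := hj
    have a1 := hmemw z hz
    have m1 : z ∈ q := hNw z a1
    have h1 := hidx_lt z m1
    have h2 := hidx_ne_last z m1 a1.ne'
    rw [Finset.mem_range]; omega
  have hinter : (A ∩ B).Nonempty := by
    rw [Finset.nonempty_iff_ne_empty]
    intro hemp
    have h1 := Finset.card_union_add_card_inter A B
    rw [hemp] at h1
    have h2 : (A ∪ B).card ≤ m - 1 := by
      calc (A ∪ B).card ≤ (Finset.range (m - 1)).card :=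
            Finset.card_le_card (Finset.union_subset hAsub hBsub)
        _ = m - 1 := Finset.card_range _
    simp only [Finset.card_empty, add_zero] at h1
    omega
  obtain ⟨j, hj⟩ := hinter
  rw [Finset.mem_inter, hA, hB, Finset.mem_image, Finset.mem_image] at hj
  obtain ⟨⟨z, hz, hz2⟩, ⟨z', hz', hz'2⟩⟩ := hj
  have hadju : G₀.Adj u z := hmemu z hz
  have hadjw : G₀.Adj w z' := hmemw z' hz'
  have mz : z ∈ q := hNu z hadju
  have mz' : z' ∈ q := hNw z' hadjw
  have hzpos : 1 ≤ q.idxOf z := hidx_pos z mz hadju.ne'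
  have hzlt : q.idxOf z < m := hidx_lt z mz
  have hz'lt : q.idxOf z' < m := hidx_lt z' mz'
  have hz'ne : q.idxOf z' ≠ m - 1 := hidx_ne_last z' mz' hadjw.ne'
  set i := q.idxOf z with hi
  have hij : q.idxOf z' = i - 1 := by omega
  refine ⟨q.take i, q.drop i, z', z, (List.take_append_drop i q).symm, ?_, ?_, ?_, ?_, hadjw, hadju⟩
  · intro h
    have := congrArg List.length h
    rw [List.length_take] at this
    simp only [List.length_nil] at this
    omega
  · intro h
    have := congrArg List.length h
    rw [List.length_drop] at this
    simp only [List.length_nil] at this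
    omega
  · rw [List.getLast?_eq_getElem?, List.length_take]
    have hlen : (min i m) - 1 = i - 1 := by omega
    rw [hlen, List.getElem?_take]
    rw [if_pos (by omega), ← hij]
    exact hgetE z' mz'
  · rw [List.head?_drop]
    exact hgetE z mz

lemma cyc_of_cross (G₀ : SimpleGraph V) (l1 l2 : List V) (hch : List.IsChain G₀.Adj (l1 ++ l2))
    (h1 : l1 ≠ []) (h2 : l2 ≠ []) (u w a' b' : V)
    (hu : l1.head? = some u) (hw : l2.getLast? = some w)
    (ha : l1.getLast? = some a') (hb : l2.head? = some b')
    (haw : G₀.Adj a' w) (hbu : G₀.Adj b' u) :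
    ∃ c : List V, c.IsChain G₀.Adj ∧ (∀ x ∈ c.head?, ∀ y ∈ c.getLast?, G₀.Adj y x) ∧
      c ~ (l1 ++ l2) := by
  refine ⟨l1 ++ l2.reverse, ?_, ?_, ?_⟩
  · rw [List.isChain_append]
    rw [List.isChain_append] at hch
    refine ⟨hch.1, ?_, ?_⟩
    · rw [List.isChain_reverse]
      exact hch.2.1.imp (fun a b h => h.symm)
    · intro x hx y hy
      rw [List.head?_reverse] at hy
      rw [ha] at hx
      rw [hw] at hy
      simp only [Option.mem_some_iff] at hx hy
      subst hx hy
      exact haw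
  · intro x hx y hy
    rw [List.head?_append_of_ne_nil _ h1, hu] at hx
    rw [List.getLast?_append_of_ne_nil _ (by simp [h2]), List.getLast?_reverse, hb] at hy
    simp only [Option.mem_some_iff] at hx hy
    subst hx hy
    exact hbu
  · exact (l2.reverse_perm.append_left l1)




lemma deg_lt_card (G : SimpleGraph V) (w : V) : deg G w < Fintype.card V := by
  have h1 : G.neighborSet w ⊆ {w}ᶜ := by
    intro z hz
    simp only [Set.mem_compl_iff, Set.mem_singleton_iff]
    exact fun h => G.loopless.irrefl w (h ▸ hz)
  calc deg G w ≤ ({w}ᶜ : Set V).ncard := Set.ncard_le_ncard h1 (Set.toFinite _)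
    _ < Fintype.card V := by
        have h2 : ({w}ᶜ : Set V).ncard < (Set.univ : Set V).ncard := by
          apply Set.ncard_lt_ncard _ (Set.toFinite _)
          refine ⟨fun z _ => trivial, ?_⟩
          intro hsub
          have := hsub (Set.mem_univ w)
          simp at this
        simpa [Set.ncard_univ, Nat.card_eq_fintype_card] using h2

lemma no_isolated (G : SimpleGraph V) (hn3 : 3 ≤ Fintype.card V)
    (hOre : ∀ u v : V, u ≠ v → ¬G.Adj u v → Fintype.card V ≤ deg G u + deg G v) (v : V) :
    ∃ z, G.Adj v z := by
  have : Nontrivial V := Fintype.one_lt_card_iff_nontrivial.1 (by omega)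
  obtain ⟨w, hw⟩ := exists_ne v
  by_cases hadj : G.Adj v w
  · exact ⟨w, hadj⟩
  · have h1 := hOre v w (Ne.symm hw) hadj
    have h2 := deg_lt_card G w
    simp only [deg] at h1 h2
    have h4 : (G.neighborSet v).Nonempty := by
      apply Set.nonempty_of_ncard_ne_zero
      omega
    obtain ⟨z, hz⟩ := h4
    exact ⟨z, hz⟩

/-- Ore's theorem, list form. -/
lemma ore_cycle (G : SimpleGraph V) (hn3 : 3 ≤ Fintype.card V)
    (hOre : ∀ u v : V, u ≠ v → ¬G.Adj u v → Fintype.card V ≤ deg G u + deg G v) :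
    ∃ c : List V, c.IsChain G.Adj ∧ c.Nodup ∧ (∀ v : V, v ∈ c) ∧
      (∀ x ∈ c.head?, ∀ y ∈ c.getLast?, G.Adj y x) := by
  classical
  set n := Fintype.card V with hn
  set P : ℕ → Prop := fun k => ∃ l : List V, l.IsChain G.Adj ∧ l.Nodup ∧ l.length = k with hP
  have hnonempty : Nonempty V := Fintype.card_pos_iff.1 (by omega)
  obtain ⟨v0⟩ := hnonempty
  obtain ⟨z0, hz0⟩ := no_isolated G hn3 hOre v0
  have hP2 : P 2 := by
    refine ⟨[v0, z0], ?_, ?_, rfl⟩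
    · simp [hz0]
    · simp [hz0.ne]
  set kmax := Nat.findGreatest P n with hkmax
  have hk2 : 2 ≤ kmax := Nat.le_findGreatest (by omega) hP2
  have hkn : kmax ≤ n := Nat.findGreatest_le n
  have hPk : P kmax := Nat.findGreatest_spec (m := 2) (by omega) hP2
  obtain ⟨l, hch, hnd, hlen⟩ := hPk
  have hmax : ∀ l' : List V, l'.IsChain G.Adj → l'.Nodup → l'.length ≤ kmax := by
    intro l' h1 h2
    by_contra hgt
    push_neg at hgt
    exact Nat.findGreatest_is_greatest hgt (h2.length_le_card) ⟨l', h1, h2, rfl⟩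
  have hlne : l ≠ [] := by rintro rfl; simp at hlen; omega
  set u := l.head hlne with hu'
  set w := l.getLast hlne with hw'
  have hu : l.head? = some u := List.head?_eq_head hlne
  have hw : l.getLast? = some w := List.getLast?_eq_getLast hlne
  have huw : u ≠ w := head_ne_last l hnd (by omega) u w hu hw
  have hclosU : ∀ z, G.Adj u z → z ∈ l := by
    intro z hz
    by_contra hzl
    have h1 : (z :: l).IsChain G.Adj := by
      rw [List.isChain_cons]
      refine ⟨?_, hch⟩
      intro y hy
      rw [hu] at hy
      simp only [Option.mem_some_iff] at hy
      subst hy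
      exact hz.symm
    have h2 : (z :: l).Nodup := by simp [hnd, hzl]
    have := hmax _ h1 h2
    simp only [List.length_cons] at this
    omega
  have hclosW : ∀ z, G.Adj w z → z ∈ l := by
    intro z hz
    by_contra hzl
    have h1 : (l ++ [z]).IsChain G.Adj := by
      rw [List.isChain_append]
      refine ⟨hch, by simp, ?_⟩
      intro x hx y hy
      rw [hw] at hx
      simp only [List.head?_cons, Option.mem_some_iff] at hx hy
      subst hx hy
      exact hz
    have h2 : (l ++ [z]).Nodup := by
      rw [List.nodup_append]
      simp [hnd, hzl]
      intro a ha he; exact hzl (he ▸ ha)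
    have := hmax _ h1 h2
    simp only [List.length_append, List.length_cons, List.length_nil] at this
    omega
  -- get a cycle c which is a permutation of l
  have hcyc : ∃ c : List V, c.IsChain G.Adj ∧ (∀ x ∈ c.head?, ∀ y ∈ c.getLast?, G.Adj y x) ∧
      c ~ l := by
    by_cases hadj : G.Adj w u
    · exact ⟨l, hch, fun x hx y hy => by
        rw [hu] at hx; rw [hw] at hy
        simp only [Option.mem_some_iff] at hx hy
        subst hx hy; exact hadj, List.Perm.refl l⟩
    · have hnadj : ¬G.Adj u w := fun h => hadj h.symm
      have hore := hOre u w huw hnadj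
      have hcard : l.length ≤ deg G u + deg G w := by omega
      obtain ⟨l1, l2, a', b', hsplit, h1ne, h2ne, ha, hb, haw, hbu⟩ :=
        lemCross G l hch hnd u w hu hw hclosU hclosW hcard
      subst hsplit
      obtain ⟨c, hc1, hc2, hc3⟩ := cyc_of_cross G l1 l2 hch h1ne h2ne u w a' b'
        (by rw [List.head?_append_of_ne_nil _ h1ne] at hu; exact hu)
        (by rw [List.getLast?_append_of_ne_nil _ h2ne] at hw; exact hw)
        ha hb haw.symm hbu.symm
      exact ⟨c, hc1, hc2, hc3⟩
  obtain ⟨c, hcch, hcwrap, hcperm⟩ := hcyc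
  have hcnd : c.Nodup := hcperm.nodup_iff.2 hnd
  by_cases hcover : ∀ v : V, v ∈ l
  · exact ⟨c, hcch, hcnd, fun v => hcperm.mem_iff.2 (hcover v), hcwrap⟩
  exfalso
  push_neg at hcover
  obtain ⟨zout, hzout⟩ := hcover
  -- extension argument
  have hext : ∀ z, z ∉ l → ∀ mm, mm ∈ c → G.Adj z mm → False := by
    intro z hzl mm hmmc hzmm
    obtain ⟨c1, c2, rfl⟩ := List.append_of_mem hmmc
    have hchsplit := List.isChain_append.1 hcch
    have h1 : (z :: (mm :: c2) ++ c1).IsChain G.Adj := by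
      rw [List.cons_append, List.isChain_cons]
      constructor
      · intro y hy
        simp only [List.cons_append, List.head?_cons, Option.mem_some_iff] at hy
        subst hy; exact hzmm
      · rw [List.isChain_append]
        refine ⟨hchsplit.2.1, hchsplit.1, ?_⟩
        intro x hx y hy
        refine hcwrap y ?_ x ?_
        · rw [List.head?_append_of_ne_nil _ (by rintro rfl; simp at hy)]
          exact hy
        · rw [List.getLast?_append_of_ne_nil _ (by simp)]
          exact hx
    have h2 : (z :: (mm :: c2) ++ c1).Nodup := by
      have hperm : ((mm :: c2) ++ c1) ~ (c1 ++ (mm :: c2)) := List.perm_append_comm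
      have hnd2 : ((mm :: c2) ++ c1).Nodup := hperm.nodup_iff.2 hcnd
      rw [List.cons_append, List.nodup_cons]
      refine ⟨?_, hnd2⟩
      intro hmem
      apply hzl
      apply hcperm.mem_iff.1
      exact hperm.mem_iff.1 (by simpa using hmem)
    have := hmax _ h1 h2
    have hclen := hcperm.length_eq
    simp only [List.cons_append, List.length_cons, List.length_append] at this hclen
    omega
  have huc : u ∈ c := hcperm.mem_iff.2 (List.head_mem hlne)
  have hnadj : ¬G.Adj zout u := fun h => hext zout hzout u huc h
  have hzu : zout ≠ u := fun h => hzout (h ▸ List.head_mem hlne)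
  have hore := hOre zout u hzu hnadj
  -- common neighbor
  have hsub : (G.neighborSet zout ∪ G.neighborSet u) ⊆ ({zout, u} : Set V)ᶜ := by
    intro t ht
    simp only [Set.mem_compl_iff, Set.mem_insert_iff, Set.mem_singleton_iff]
    rintro (rfl | rfl)
    · rcases ht with ht | ht
      · exact G.loopless.irrefl _ ht
      · exact hnadj ht.symm
    · rcases ht with ht | ht
      · exact hnadj (by exact ht)
      · exact G.loopless.irrefl _ ht
  have hcompl : (({zout, u} : Set V)ᶜ).ncard = n - 2 := by
    have h0 : (({zout, u} : Set V)ᶜ) = Set.univ \ {zout, u} := by rw [Set.compl_eq_univ_diff]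
    rw [h0, Set.ncard_diff (Set.subset_univ _) (Set.toFinite _), Set.ncard_univ,
      Nat.card_eq_fintype_card, Set.ncard_pair hzu]
  have hunion : (G.neighborSet zout ∪ G.neighborSet u).ncard ≤ n - 2 := by
    rw [← hcompl]
    exact Set.ncard_le_ncard hsub (Set.toFinite _)
  have hinter := Set.ncard_inter_add_ncard_union (G.neighborSet zout) (G.neighborSet u)
    (Set.toFinite _) (Set.toFinite _)
  have hinter2 : 1 ≤ (G.neighborSet zout ∩ G.neighborSet u).ncard := by
    simp only [deg] at hore
    omega
  have hne0 : (G.neighborSet zout ∩ G.neighborSet u).ncard ≠ 0 := by omega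
  obtain ⟨mm, hmm1, hmm2⟩ := Set.nonempty_of_ncard_ne_zero hne0
  by_cases hmmc : mm ∈ c
  · exact hext zout hzout mm hmmc hmm1
  · refine hext mm (fun h => hmmc (hcperm.mem_iff.2 h)) u huc ?_
    exact (hmm2 : G.Adj u mm).symm



end OreFT


namespace OreFT
variable {V : Type*} [Fintype V] [DecidableEq V] (G : SimpleGraph V) (x y : V)

local notation "H" => G.deleteEdges {s(x, y)}

lemma Hadj_iff (u v : V) : (H).Adj u v ↔ G.Adj u v ∧ ¬(u = x ∧ v = y) ∧ ¬(u = y ∧ v = x) := by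
  rw [SimpleGraph.deleteEdges_adj]
  simp only [Set.mem_singleton_iff, Sym2.eq_iff]
  tauto

lemma Hadj_off (u v : V) (h : G.Adj u v) (h1 : (u ≠ x ∧ v ≠ x) ∨ (u ≠ y ∧ v ≠ y)) :
    (H).Adj u v := by
  rw [Hadj_iff]
  refine ⟨h, ?_, ?_⟩ <;> rcases h1 with ⟨h2, h3⟩ | ⟨h2, h3⟩ <;> tauto

lemma chainH_of_chainG (l : List V) (hch : l.IsChain G.Adj)
    (hmem : (∀ v ∈ l, v ≠ x) ∨ (∀ v ∈ l, v ≠ y)) : l.IsChain (H).Adj := by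
  induction l with
  | nil => simp
  | cons c t ih =>
    rw [List.isChain_cons] at hch ⊢
    have hmem' : (∀ v ∈ t, v ≠ x) ∨ (∀ v ∈ t, v ≠ y) := by
      rcases hmem with h | h
      · exact Or.inl fun v hv => h v (List.mem_cons_of_mem _ hv)
      · exact Or.inr fun v hv => h v (List.mem_cons_of_mem _ hv)
    refine ⟨?_, ih hch.2 hmem'⟩
    intro z hz
    have hzt : z ∈ t := by
      cases t with
      | nil => simp at hz
      | cons d t' =>
        simp only [List.head?_cons, Option.mem_some_iff] at hz
        subst hz; simp
    refine Hadj_off G x y _ _ (hch.1 z hz) ?_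
    rcases hmem with h | h
    · exact Or.inl ⟨h c (by simp), h z (by simp [hzt])⟩
    · exact Or.inr ⟨h c (by simp), h z (by simp [hzt])⟩

lemma degH_eq (v : V) (hvx : v ≠ x) (hvy : v ≠ y) : deg (H) v = deg G v := by
  unfold deg
  congr 1
  ext z
  simp only [SimpleGraph.mem_neighborSet]
  rw [Hadj_iff]
  constructor
  · exact fun h => h.1
  · intro h
    exact ⟨h, by tauto, by tauto⟩

/-- If `H` is not hamiltonian, a hamiltonian path of `H` cannot have `H`-adjacent endpoints. -/
lemma no_adj_ends (hn3 : 3 ≤ Fintype.card V) (HnH : ¬(H).IsHamiltonian)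
    (q : List V) (hch : q.IsChain (H).Adj) (hnd : q.Nodup) (hcov : ∀ v : V, v ∈ q)
    (u w : V) (hu : q.head? = some u) (hw : q.getLast? = some w) : ¬(H).Adj w u := by
  intro hadj
  apply HnH
  apply isHam_of_list (H) q hch hnd hcov
  · rw [cover_length q hnd hcov]; exact hn3
  · intro a ha b hb
    rw [hu] at ha; rw [hw] at hb
    simp only [Option.mem_some_iff] at ha hb
    subst ha hb
    exact hadj

/-- A hamiltonian path of `H` cannot have both endpoints outside `{x, y}` (given Ore). -/
lemma pair_kill (hn3 : 3 ≤ Fintype.card V)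
    (hOre : ∀ u v : V, u ≠ v → ¬G.Adj u v → Fintype.card V ≤ deg G u + deg G v)
    (HnH : ¬(H).IsHamiltonian)
    (q : List V) (hch : q.IsChain (H).Adj) (hnd : q.Nodup) (hcov : ∀ v : V, v ∈ q)
    (u w : V) (hu : q.head? = some u) (hw : q.getLast? = some w)
    (hux : u ≠ x) (huy : u ≠ y) (hwx : w ≠ x) (hwy : w ≠ y) : False := by
  have hlen : q.length = Fintype.card V := cover_length q hnd hcov
  have huw : u ≠ w := head_ne_last q hnd (by omega) u w hu hw
  have hnadjH : ¬(H).Adj w u := no_adj_ends G x y hn3 HnH q hch hnd hcov u w hu hw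
  have hnadjG : ¬G.Adj w u := fun h => hnadjH (Hadj_off G x y w u h (Or.inl ⟨hwx, hux⟩))
  have hore := hOre u w huw (fun h => hnadjG h.symm)
  have hdu := degH_eq G x y u hux huy
  have hdw := degH_eq G x y w hwx hwy
  have hcard : q.length ≤ deg (H) u + deg (H) w := by omega
  obtain ⟨l1, l2, a', b', hsplit, h1ne, h2ne, ha, hb, haw, hbu⟩ :=
    lemCross (H) q hch hnd u w hu hw (fun z _ => hcov z) (fun z _ => hcov z) hcard
  subst hsplit
  obtain ⟨c, hc1, hc2, hc3⟩ := cyc_of_cross (H) l1 l2 hch h1ne h2ne u w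
    a' b' (by rw [List.head?_append_of_ne_nil _ h1ne] at hu; exact hu)
    (by rw [List.getLast?_append_of_ne_nil _ h2ne] at hw; exact hw)
    ha hb haw.symm hbu.symm
  apply HnH
  apply isHam_of_list (H) c hc1 (hc3.nodup_iff.2 hnd) (fun v => hc3.mem_iff.2 (hcov v))
  · rw [hc3.length_eq, hlen]; exact hn3
  · exact hc2

end OreFT


namespace OreFT
variable {V : Type*} [Fintype V] [DecidableEq V] (G : SimpleGraph V) (x y : V)

local notation "H" => G.deleteEdges {s(x, y)}

/-- Rotation endpoint classification: a neighbor `z ≠ y` of `x` on a hamiltonian path of `H`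
starting at `x` and ending outside `{x,y}` is either the second vertex or the successor of `y`. -/
lemma claim' (hn3 : 3 ≤ Fintype.card V)
    (hOre : ∀ u v : V, u ≠ v → ¬G.Adj u v → Fintype.card V ≤ deg G u + deg G v)
    (hxy : G.Adj x y) (HnH : ¬(H).IsHamiltonian)
    (q : List V) (hch : q.IsChain (H).Adj) (hnd : q.Nodup) (hcov : ∀ v : V, v ∈ q)
    (w : V) (hhead : q.head? = some x) (hlast : q.getLast? = some w)
    (hwx : w ≠ x) (hwy : w ≠ y)
    (z : V) (hz : G.Adj x z) (hzy : z ≠ y) :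
    q.tail.head? = some z ∨ ∃ s t, q = s ++ y :: z :: t := by
  have hxyne : x ≠ y := hxy.ne
  have hHxz : (H).Adj x z := Hadj_off G x y x z hz (Or.inr ⟨hxyne, hzy⟩)
  have hzx : z ≠ x := hz.ne'
  have hzw : z ≠ w := by
    have hne := no_adj_ends G x y hn3 HnH q hch hnd hcov x w hhead hlast
    intro he
    exact hne (by rw [← he]; exact hHxz.symm)
  obtain ⟨s, t, rfl⟩ := List.append_of_mem (hcov z)
  have hsne : s ≠ [] := by
    rintro rfl
    simp only [List.nil_append, List.head?_cons, Option.some.injEq] at hhead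
    exact hzx hhead
  have htne : t ≠ [] := by
    rintro rfl
    rw [List.getLast?_concat] at hlast
    simp only [Option.some.injEq] at hlast
    exact hzw hlast
  obtain ⟨x', s', rfl⟩ := List.exists_cons_of_ne_nil hsne
  obtain rfl : x = x' := by
    rw [List.cons_append, List.head?_cons] at hhead
    simpa using hhead.symm
  by_cases hs' : s' = []
  · subst hs'
    left
    simp
  · set u' := s'.getLast hs' with hu'
    have hu'mem : u' ∈ s' := List.getLast_mem hs'
    have hchs := List.isChain_append.1 (by simpa using hch :
      List.IsChain (H).Adj ((x :: s') ++ (z :: t)))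
    have hxs'nd : (x :: s').Nodup := by
      have := List.nodup_append.1 (by simpa using hnd :
        ((x :: s') ++ (z :: t)).Nodup)
      exact this.1
    have hxns' : x ∉ s' := by
      rw [List.nodup_cons] at hxs'nd
      exact hxs'nd.1
    have hu'x : u' ≠ x := fun he => hxns' (he ▸ hu'mem)
    by_cases hu'y : u' = y
    · right
      have hdl : s'.dropLast ++ [u'] = s' := List.dropLast_append_getLast hs'
      refine ⟨x :: s'.dropLast, t, ?_⟩
      rw [← hdl, hu'y]
      simp
    · exfalso
      set R := s'.reverse ++ x :: z :: t with hR
      have hRch : List.IsChain (H).Adj R := by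
        rw [hR, List.isChain_append]
        refine ⟨?_, ?_, ?_⟩
        · rw [List.isChain_reverse]
          exact ((List.isChain_cons.1 hchs.1).2).imp (fun a b h => h.symm)
        · rw [List.isChain_cons]
          refine ⟨?_, hchs.2.1⟩
          intro r hr
          simp only [List.head?_cons, Option.mem_some_iff] at hr
          subst hr
          exact hHxz
        · intro p hp r hr
          rw [List.getLast?_reverse] at hp
          simp only [List.head?_cons, Option.mem_some_iff] at hr
          subst hr
          exact ((List.isChain_cons.1 hchs.1).1 p hp).symm
      have hRperm : R ~ ((x :: s') ++ (z :: t)) := by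
        have h1 : R = (x :: s').reverse ++ (z :: t) := by
          rw [hR, List.reverse_cons]
          simp
        rw [h1]
        exact (x :: s').reverse_perm.append_right _
      have hRnd : R.Nodup := hRperm.nodup_iff.2 (by simpa using hnd)
      have hRcov : ∀ v : V, v ∈ R := fun v => hRperm.mem_iff.2 (by simpa using hcov v)
      have hRhead : R.head? = some u' := by
        rw [hR, List.head?_append_of_ne_nil _ (by simp [hs']), List.head?_reverse]
        rw [hu', List.getLast?_eq_getLast hs']
      have hRlast : R.getLast? = some w := by
        rw [hR, List.getLast?_append_of_ne_nil _ (by simp)]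
        have h2 : (x :: z :: t).getLast? = (z :: t).getLast? := by
          rw [show (x :: z :: t) = [x] ++ (z :: t) by simp,
            List.getLast?_append_of_ne_nil _ (by simp)]
        rw [h2]
        have h3 : (x :: s' ++ z :: t).getLast? = (z :: t).getLast? := by
          rw [show (x :: s' ++ z :: t) = (x :: s') ++ (z :: t) by simp,
            List.getLast?_append_of_ne_nil _ (by simp)]
        rw [h3] at hlast
        exact hlast
      exact pair_kill G x y hn3 hOre HnH R hRch hRnd hRcov u' w hRhead hRlast hu'x hu'y hwx hwy

end OreFT


namespace OreFT

lemma mid_eq {α : Type*} {y : α} : ∀ {s1 s2 t1 t2 : List α},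
    s1 ++ y :: t1 = s2 ++ y :: t2 → y ∉ s1 → y ∉ s2 → s1 = s2 ∧ t1 = t2 := by
  intro s1
  induction s1 with
  | nil =>
    intro s2 t1 t2 h hy1 hy2
    cases s2 with
    | nil => simpa using h
    | cons c s2' =>
      exfalso
      simp only [List.nil_append, List.cons_append, List.cons.injEq] at h
      exact hy2 (by simp [h.1])
  | cons c s1' ih =>
    intro s2 t1 t2 h hy1 hy2
    cases s2 with
    | nil =>
      exfalso
      simp only [List.nil_append, List.cons_append, List.cons.injEq] at h
      exact hy1 (by simp [h.1])
    | cons d s2' =>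
      simp only [List.cons_append, List.cons.injEq] at h
      obtain ⟨rfl, h2⟩ := h
      have := ih h2 (fun hm => hy1 (by simp [hm])) (fun hm => hy2 (by simp [hm]))
      exact ⟨by rw [this.1], this.2⟩

variable {V : Type*} [Fintype V] [DecidableEq V] (G : SimpleGraph V) (x y : V)

local notation "H" => G.deleteEdges {s(x, y)}

lemma core (hn4 : 4 ≤ Fintype.card V)
    (hOre : ∀ u v : V, u ≠ v → ¬G.Adj u v → Fintype.card V ≤ deg G u + deg G v)
    (hxy : G.Adj x y) (HnH : ¬(H).IsHamiltonian)
    (a b : V) (m : List V)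
    (hch : List.IsChain (H).Adj (x :: a :: m ++ [b, y])) (hnd : (x :: a :: m ++ [b, y]).Nodup)
    (hcov : ∀ v : V, v ∈ x :: a :: m ++ [b, y])
    (hdy : 3 ≤ deg G y) :
    ∀ z, G.Adj x z → z = y ∨ z = a ∨ z = b := by
  have hn3 : 3 ≤ Fintype.card V := by omega
  have hxyne : x ≠ y := hxy.ne
  -- nodup facts
  have hxnotin : x ∉ a :: m ++ [b, y] := (List.nodup_cons.1 hnd).1
  have hnd1 : (a :: m ++ [b, y]).Nodup := (List.nodup_cons.1 hnd).2
  have hxb : x ≠ b := fun h => hxnotin (by simp [h])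
  have hynotam : y ∉ a :: m := by
    intro hy
    have h2 := List.nodup_append.1 (show ((a :: m) ++ [b, y]).Nodup by simpa using hnd1)
    exact h2.2.2 _ hy _ (by simp) rfl
  have hbnotam : b ∉ a :: m := by
    intro hb
    have h2 := List.nodup_append.1 (show ((a :: m) ++ [b, y]).Nodup by simpa using hnd1)
    exact h2.2.2 _ hb _ (by simp) rfl
  -- find z0
  have hnsub : ¬ G.neighborSet y ⊆ {x, b} := by
    intro hsub
    have h1 : (G.neighborSet y).ncard ≤ ({x, b} : Set V).ncard :=
      Set.ncard_le_ncard hsub (Set.toFinite _)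
    rw [Set.ncard_pair hxb] at h1
    have : deg G y ≤ 2 := h1
    omega
  obtain ⟨z0, hz0N, hz0nin⟩ := Set.not_subset.1 hnsub
  have hz0adj : G.Adj y z0 := hz0N
  have hz0x : z0 ≠ x := fun h => hz0nin (by simp [h])
  have hz0b : z0 ≠ b := fun h => hz0nin (by simp [h])
  have hz0y : z0 ≠ y := fun h => G.loopless.irrefl y (h ▸ hz0adj)
  have hz0am : z0 ∈ a :: m := by
    have hmem := hcov z0
    simp only [List.mem_cons, List.mem_append, List.not_mem_nil, or_false] at hmem
    simp only [List.mem_cons]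
    tauto
  obtain ⟨l, r, hlr⟩ := List.append_of_mem hz0am
  set L1 := x :: (l ++ [z0]) with hL1
  set L2 := r ++ [b, y] with hL2
  have hp_split : x :: a :: m ++ [b, y] = L1 ++ L2 := by
    rw [hL1, hL2]
    rw [show x :: a :: m ++ [b, y] = x :: ((a :: m) ++ [b, y]) by simp, hlr]
    simp
  have hL2ne : L2 ≠ [] := by rw [hL2]; simp
  have hL2rev : L2.reverse = y :: b :: r.reverse := by rw [hL2]; simp
  set P2 := L1 ++ L2.reverse with hP2
  rw [hp_split] at hch hnd hcov
  have hchs := List.isChain_append.1 hch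
  have hndsplit := List.nodup_append.1 hnd
  have hchain2 : List.IsChain (H).Adj P2 := by
    rw [hP2, List.isChain_append]
    refine ⟨hchs.1, ?_, ?_⟩
    · rw [List.isChain_reverse]
      exact hchs.2.1.imp (fun u v h => h.symm)
    · intro p hp r' hr'
      rw [show L1 = (x :: l) ++ [z0] by rw [hL1]; simp, List.getLast?_concat] at hp
      rw [List.head?_reverse, hL2, List.getLast?_append_of_ne_nil _ (by simp)] at hr'
      simp only [Option.mem_some_iff] at hp
      have hr'y : y = r' := by simpa using hr'
      subst hp
      subst hr'y
      exact Hadj_off G x y z0 y hz0adj.symm (Or.inl ⟨hz0x, fun h => hxyne h.symm⟩)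
  have hperm : P2 ~ L1 ++ L2 := L2.reverse_perm.append_left L1
  have hnd2 : P2.Nodup := hperm.nodup_iff.2 hnd
  have hcov2 : ∀ v : V, v ∈ P2 := fun v => hperm.mem_iff.2 (hcov v)
  have hL2nd : L2.Nodup := hndsplit.2.1
  set w := L2.head hL2ne with hwdef
  have hwhead : L2.head? = some w := List.head?_eq_head hL2ne
  have hheadP2 : P2.head? = some x := by
    rw [hP2, List.head?_append_of_ne_nil _ (by rw [hL1]; simp), hL1, List.head?_cons]
  have hlastP2 : P2.getLast? = some w := by
    rw [hP2, List.getLast?_append_of_ne_nil _ (by simp [hL2ne]), List.getLast?_reverse]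
    exact hwhead
  have hL2last : L2.getLast? = some y := by
    rw [hL2, List.getLast?_append_of_ne_nil _ (by simp)]
    simp [List.getLast?]
  have hwy : w ≠ y := by
    have hlen2 : 2 ≤ L2.length := by simp [hL2]
    exact head_ne_last L2 hL2nd hlen2 w y hwhead hL2last
  have hwx : w ≠ x := by
    have hwmem : w ∈ L2 := hwdef ▸ List.head_mem hL2ne
    intro h
    have hxL1 : x ∈ L1 := by rw [hL1]; simp
    exact hndsplit.2.2 _ hxL1 _ (h ▸ hwmem) rfl
  intro z hzadj
  by_cases hzy : z = y
  · exact Or.inl hzy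
  have hclaim := claim' G x y hn3 hOre hxy HnH P2 hchain2 hnd2 hcov2 w hheadP2 hlastP2
    hwx hwy z hzadj hzy
  rcases hclaim with hleft | ⟨s, t, heq⟩
  · -- second vertex of P2 is head of (l ++ [z0])
    right; left
    have htail : P2.tail = (l ++ [z0]) ++ L2.reverse := by
      rw [hP2, hL1]; simp
    rw [htail] at hleft
    rw [List.head?_append_of_ne_nil _ (by simp)] at hleft
    cases l with
    | nil =>
      simp only [List.nil_append, List.head?_cons, Option.some.injEq] at hleft
      have ha : a = z0 := by simpa using congrArg List.head? hlr
      exact (ha.trans hleft).symm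
    | cons a2 l2 =>
      have ha2 : a = a2 := by simpa using congrArg List.head? hlr
      simp only [List.cons_append, List.head?_cons, Option.some.injEq] at hleft
      exact (ha2.trans hleft).symm
  · -- z is the successor of y, which is b
    right; right
    have heq2 : L1 ++ (y :: (b :: r.reverse)) = s ++ (y :: (z :: t)) := by
      rw [← hL2rev]
      rw [hP2] at heq
      exact heq
    have hyL1 : y ∉ L1 := by
      rw [hL1]
      intro hmem
      simp only [List.mem_cons, List.mem_append, List.mem_singleton, List.not_mem_nil,
        or_false] at hmem
      rcases hmem with h | h | h
      · exact hxyne h.symm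
      · exact hynotam (by rw [hlr]; exact List.mem_append.2 (Or.inl h))
      · exact hz0y h.symm
    have hys : y ∉ s := by
      have : (s ++ (y :: (z :: t))).Nodup := by rw [← heq2, heq2]; rw [heq] at hnd2; exact hnd2
      have h2 := List.nodup_append.1 this
      exact fun hm => h2.2.2 _ hm _ (by simp) rfl
    have := mid_eq heq2 hyL1 hys
    have h3 : b :: r.reverse = z :: t := this.2
    have hb : b = z := by simpa using congrArg List.head? h3
    exact hb.symm

end OreFT


namespace OreFT
variable {V : Type*} [Fintype V] [DecidableEq V]

def Ex3 (G : SimpleGraph V) : Prop :=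
  ∃ (a b : V) (S T : Finset V),
    a ≠ b ∧ a ∉ S ∧ a ∉ T ∧ b ∉ S ∧ b ∉ T ∧ Disjoint S T ∧
    insert a (insert b (S ∪ T)) = (Finset.univ : Finset V) ∧
    (S.card = 1 ∨ S.card = 2) ∧ 1 ≤ T.card ∧ S.card + T.card = Fintype.card V - 2 ∧
    (∀ u ∈ S, ∀ v ∈ S, u ≠ v → G.Adj u v) ∧
    (∀ u ∈ T, ∀ v ∈ T, u ≠ v → G.Adj u v) ∧
    (∀ u ∈ S, ∀ v ∈ T, ¬G.Adj u v) ∧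
    (∀ v ∈ S ∪ T, G.Adj a v ∧ G.Adj b v)

lemma satur (G : SimpleGraph V) (w : V) (F : Set V) (hwF : w ∉ F)
    (hnadj : ∀ f ∈ F, ¬G.Adj w f)
    (hdeg : Fintype.card V - 1 - F.ncard ≤ deg G w) :
    ∀ z, z ≠ w → z ∉ F → G.Adj w z := by
  have hsub : G.neighborSet w ⊆ (insert w F)ᶜ := by
    intro t ht
    simp only [Set.mem_compl_iff, Set.mem_insert_iff]
    push_neg
    exact ⟨fun h => G.loopless.irrefl w (h ▸ ht), fun hF => hnadj t hF ht⟩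
  have h1 : (insert w F).ncard = F.ncard + 1 := Set.ncard_insert_of_notMem hwF (Set.toFinite _)
  have hcompl_card : ((insert w F)ᶜ : Set V).ncard = Fintype.card V - 1 - F.ncard := by
    have h0 : ((insert w F)ᶜ : Set V) = Set.univ \ insert w F := by
      rw [Set.compl_eq_univ_diff]
    rw [h0, Set.ncard_diff (Set.subset_univ _) (Set.toFinite _), Set.ncard_univ,
      Nat.card_eq_fintype_card, h1]
    omega
  have heq : G.neighborSet w = (insert w F)ᶜ :=
    Set.eq_of_subset_of_ncard_le hsub (by rw [hcompl_card]; exact hdeg) (Set.toFinite _)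
  intro z hzw hzF
  have hz : z ∈ ((insert w F)ᶜ : Set V) := by
    simp only [Set.mem_compl_iff, Set.mem_insert_iff]
    push_neg
    exact ⟨hzw, hzF⟩
  rw [← heq] at hz
  exact hz

lemma caseA (G : SimpleGraph V) (hn4 : 4 ≤ Fintype.card V)
    (hOre : ∀ u v : V, u ≠ v → ¬G.Adj u v → Fintype.card V ≤ deg G u + deg G v)
    (x y b : V) (hxy : G.Adj x y) (hby : G.Adj b y) (hxb : x ≠ b)
    (hdy : deg G y = 2) : Ex3 G := by
  have hxyne : x ≠ y := hxy.ne
  have hbyne : b ≠ y := hby.ne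
  have hNy : ({x, b} : Set V) = G.neighborSet y := by
    apply Set.eq_of_subset_of_ncard_le
    · intro t ht
      rcases ht with rfl | rfl
      · exact hxy.symm
      · exact hby.symm
    · rw [Set.ncard_pair hxb]
      exact le_of_eq hdy
    · exact Set.toFinite _
  have hnadjy : ∀ v, v ≠ x → v ≠ b → ¬G.Adj v y := by
    intro v hvx hvb hadj
    have : v ∈ G.neighborSet y := hadj.symm
    rw [← hNy] at this
    rcases this with h | h
    · exact hvx h
    · exact hvb h
  have hTadj : ∀ v, v ≠ x → v ≠ y → v ≠ b → ∀ z, z ≠ v → z ≠ y → G.Adj v z := by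
    intro v hvx hvy hvb
    have hnadj : ¬G.Adj v y := hnadjy v hvx hvb
    have hore := hOre v y hvy hnadj
    apply satur G v {y} (by simp [hvy]) ?_ ?_
    · intro f hf
      rw [Set.mem_singleton_iff] at hf
      subst hf
      exact hnadj
    · rw [Set.ncard_singleton]
      omega
  have hcard3 : ({x, y, b} : Finset V).card = 3 := by
    rw [Finset.card_insert_of_notMem (by simp [hxyne, hxb]),
      Finset.card_insert_of_notMem (by simp [hbyne.symm]), Finset.card_singleton]
  set T : Finset V := Finset.univ \ {x, y, b} with hT
  have hTmem : ∀ v, v ∈ T ↔ (v ≠ x ∧ v ≠ y ∧ v ≠ b) := by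
    intro v
    rw [hT]
    simp only [Finset.mem_sdiff, Finset.mem_univ, true_and, Finset.mem_insert,
      Finset.mem_singleton]
    tauto
  have hTcard : T.card = Fintype.card V - 3 := by
    rw [hT, Finset.card_sdiff_of_subset (Finset.subset_univ _), Finset.card_univ, hcard3]
  refine ⟨x, b, {y}, T, hxb, by simp [hxyne], by simp [hTmem], by simp [hbyne],
    by simp [hTmem], ?_, ?_, Or.inl (Finset.card_singleton y), by omega, ?_, ?_, ?_, ?_, ?_⟩
  · rw [Finset.disjoint_left]
    intro v hv
    rw [Finset.mem_singleton] at hv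
    subst hv
    rw [hTmem]
    intro hc
    exact hc.2.1 rfl
  · ext z
    simp only [Finset.mem_insert, Finset.mem_union, Finset.mem_singleton, Finset.mem_univ,
      iff_true]
    rcases eq_or_ne z x with rfl | h1
    · tauto
    rcases eq_or_ne z b with rfl | h2
    · tauto
    rcases eq_or_ne z y with rfl | h3
    · tauto
    have : z ∈ T := (hTmem z).2 ⟨h1, h3, h2⟩
    tauto
  · rw [Finset.card_singleton, hTcard]; omega
  · intro u hu v hv huv
    rw [Finset.mem_singleton] at hu hv
    subst hu; subst hv
    exact absurd rfl huv
  · intro u hu v hv huv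
    rw [hTmem] at hu hv
    exact hTadj u hu.1 hu.2.1 hu.2.2 v (Ne.symm huv) hv.2.1
  · intro u hu v hv
    rw [Finset.mem_singleton] at hu
    subst hu
    rw [hTmem] at hv
    exact fun h => hnadjy v hv.1 hv.2.2 h.symm
  · intro v hv
    rw [Finset.mem_union, Finset.mem_singleton] at hv
    rcases hv with rfl | hv
    · exact ⟨hxy, hby⟩
    · rw [hTmem] at hv
      constructor
      · exact (hTadj v hv.1 hv.2.1 hv.2.2 x (Ne.symm hv.1) hxyne).symm
      · exact (hTadj v hv.1 hv.2.1 hv.2.2 b (Ne.symm hv.2.2) hbyne).symm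

end OreFT


namespace OreFT
variable {V : Type*} [Fintype V] [DecidableEq V]

lemma main_struct (G : SimpleGraph V) (x y : V) (hn4 : 4 ≤ Fintype.card V)
    (hOre : ∀ u v : V, u ≠ v → ¬G.Adj u v → Fintype.card V ≤ deg G u + deg G v)
    (hxy : G.Adj x y) (HnH : ¬(G.deleteEdges {s(x, y)}).IsHamiltonian)
    (p : List V) (hch : p.IsChain (G.deleteEdges {s(x, y)}).Adj) (hnd : p.Nodup)
    (hcov : ∀ v : V, v ∈ p) (hhead : p.head? = some x) (hlast : p.getLast? = some y) :
    Ex3 G := by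
  have hxyne : x ≠ y := hxy.ne
  have hplen : p.length = Fintype.card V := cover_length p hnd hcov
  -- decompose p = x :: a :: m ++ [b, y]
  obtain ⟨x0, t, rfl⟩ := List.exists_cons_of_ne_nil (show p ≠ [] by rintro rfl; simp at hhead)
  obtain rfl : x = x0 := by simpa using hhead.symm
  have htne : t ≠ [] := by rintro rfl; simp at hplen; omega
  obtain ⟨a, t2, rfl⟩ := List.exists_cons_of_ne_nil htne
  have ht2ne : t2 ≠ [] := by
    rintro rfl
    simp only [List.length_cons, List.length_nil] at hplen
    omega
  have hyl : t2.getLast ht2ne = y := by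
    rw [List.getLast?_eq_getLast (by simp),
      List.getLast_cons (by simp [ht2ne] : (a :: t2 : List V) ≠ []), List.getLast_cons ht2ne]
      at hlast
    simpa using hlast
  have ht2eq : t2 = t2.dropLast ++ [y] := by
    conv_lhs => rw [← List.dropLast_append_getLast ht2ne]
    rw [hyl]
  have ht3ne : t2.dropLast ≠ [] := by
    intro h
    rw [h] at ht2eq
    rw [ht2eq] at hplen
    simp at hplen
    omega
  set t3 := t2.dropLast with ht3def
  obtain ⟨m, b, hmb⟩ : ∃ m bb, t3 = m ++ [bb] :=
    ⟨t3.dropLast, t3.getLast ht3ne, (List.dropLast_append_getLast ht3ne).symm⟩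
  have hpeq : t2 = m ++ [b, y] := by
    rw [ht2eq, hmb]
    simp
  clear ht2eq hmb hyl ht3ne
  subst hpeq
  -- basic adjacency facts
  have hxaH : (G.deleteEdges {s(x, y)}).Adj x a := by
    rw [List.isChain_cons_cons] at hch
    exact hch.1
  have hchtail : (a :: m ++ [b, y] : List V).IsChain (G.deleteEdges {s(x, y)}).Adj := by
    rw [List.isChain_cons_cons] at hch
    exact hch.2
  have hchtail2 : (m ++ [b, y] : List V).IsChain (G.deleteEdges {s(x, y)}).Adj :=
    (List.isChain_cons.1 hchtail).2
  have hbyH : (G.deleteEdges {s(x, y)}).Adj b y := by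
    have h2 := (List.isChain_append.1 hchtail2).2.1
    rw [List.isChain_cons] at h2
    simpa using h2.1
  have hxaG : G.Adj x a := ((Hadj_iff G x y x a).1 hxaH).1
  have hbyG : G.Adj b y := ((Hadj_iff G x y b y).1 hbyH).1
  -- distinctness
  have hxnotin : x ∉ a :: m ++ [b, y] := (List.nodup_cons.1 hnd).1
  have hnd1 : (a :: m ++ [b, y]).Nodup := (List.nodup_cons.1 hnd).2
  have hanotin : a ∉ m ++ [b, y] := (List.nodup_cons.1 hnd1).1
  have hnd2 : (m ++ [b, y]).Nodup := (List.nodup_cons.1 hnd1).2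
  have hnd2' := List.nodup_append.1 hnd2
  have hbm : b ∉ m := fun h => hnd2'.2.2 _ h _ (by simp) rfl
  have hym : y ∉ m := fun h => hnd2'.2.2 _ h _ (by simp) rfl
  have hbyne : b ≠ y := by
    have := hnd2'.2.1
    simp only [List.nodup_cons, List.mem_singleton] at this
    exact this.1
  have hxa : x ≠ a := fun h => hxnotin (by simp [h])
  have hxb : x ≠ b := fun h => hxnotin (by simp [h])
  have hxm : x ∉ m := fun h => hxnotin (by simp [h])
  have hab : a ≠ b := fun h => hanotin (by simp [h])
  have hay : a ≠ y := fun h => hanotin (by simp [h])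
  have ham : a ∉ m := fun h => hanotin (by simp [h])
  -- degree lower bounds
  have hdy2 : 2 ≤ deg G y := by
    have hsub : ({x, b} : Set V) ⊆ G.neighborSet y := by
      intro z hz
      rcases hz with rfl | rfl
      · exact hxy.symm
      · exact hbyG.symm
    calc 2 = ({x, b} : Set V).ncard := (Set.ncard_pair hxb).symm
      _ ≤ _ := Set.ncard_le_ncard hsub (Set.toFinite _)
  have hdx2 : 2 ≤ deg G x := by
    have hsub : ({y, a} : Set V) ⊆ G.neighborSet x := by
      intro z hz
      rcases hz with rfl | rfl
      · exact hxy
      · exact hxaG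
    calc 2 = ({y, a} : Set V).ncard := (Set.ncard_pair (Ne.symm hay)).symm
      _ ≤ _ := Set.ncard_le_ncard hsub (Set.toFinite _)
  by_cases hdy : deg G y = 2
  · exact caseA G hn4 hOre x y b hxy hbyG hxb hdy
  by_cases hdx : deg G x = 2
  · exact caseA G hn4 hOre y x a hxy.symm hxaG.symm (Ne.symm hay) hdx
  have hdy3 : 3 ≤ deg G y := by omega
  have hdx3 : 3 ≤ deg G x := by omega
  -- core both ways
  have coreX : ∀ z, G.Adj x z → z = y ∨ z = a ∨ z = b :=
    core G x y hn4 hOre hxy HnH a b m hch hnd hcov hdy3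
  have hHswap : (G.deleteEdges {s(y, x)}) = (G.deleteEdges {s(x, y)}) := by
    rw [Sym2.eq_swap]
  have hrev : (x :: a :: m ++ [b, y] : List V).reverse = y :: b :: m.reverse ++ [a, x] := by
    simp
  have coreY : ∀ z, G.Adj y z → z = x ∨ z = b ∨ z = a := by
    apply core G y x hn4 hOre hxy.symm (by rw [hHswap]; exact HnH) b a m.reverse
    · rw [hHswap, ← hrev, List.isChain_reverse]
      exact hch.imp (fun u v h => h.symm)
    · rw [← hrev]
      exact List.nodup_reverse.2 hnd
    · intro v
      rw [← hrev, List.mem_reverse]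
      exact hcov v
    · exact hdx3
  -- neighborhoods exactly
  have hyab_card : ({y, a, b} : Set V).ncard ≤ 3 := by
    apply le_trans (Set.ncard_insert_le _ _)
    have := Set.ncard_insert_le a ({b} : Set V)
    simp only [Set.ncard_singleton] at this ⊢
    omega
  have hxba_card : ({x, b, a} : Set V).ncard ≤ 3 := by
    apply le_trans (Set.ncard_insert_le _ _)
    have := Set.ncard_insert_le b ({a} : Set V)
    simp only [Set.ncard_singleton] at this ⊢
    omega
  have hNx : G.neighborSet x = {y, a, b} := by
    apply Set.eq_of_subset_of_ncard_le
    · intro z hz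
      exact coreX z hz
    · exact le_trans hyab_card hdx3
    · exact Set.toFinite _
  have hNy : G.neighborSet y = {x, b, a} := by
    apply Set.eq_of_subset_of_ncard_le
    · intro z hz
      exact coreY z hz
    · exact le_trans hxba_card hdy3
    · exact Set.toFinite _
  have hxbG : G.Adj x b := by
    have : b ∈ G.neighborSet x := by rw [hNx]; simp
    exact this
  have hyaG : G.Adj y a := by
    have : a ∈ G.neighborSet y := by rw [hNy]; simp
    exact this
  have hdegx3 : deg G x = 3 := by
    unfold deg
    rw [hNx]
    rw [Set.ncard_insert_of_notMem (by simp [hay.symm, hbyne.symm]) (Set.toFinite _),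
      Set.ncard_insert_of_notMem (by simp [hab]) (Set.toFinite _), Set.ncard_singleton]
  have hdegy3 : deg G y = 3 := by
    unfold deg
    rw [hNy]
    rw [Set.ncard_insert_of_notMem (by simp [hxb, hxa]) (Set.toFinite _),
      Set.ncard_insert_of_notMem (by simp [hab.symm]) (Set.toFinite _), Set.ncard_singleton]
  -- m nonempty
  have hmne : m ≠ [] := by
    rintro rfl
    apply HnH
    apply isHam_of_list _ [x, a, y, b]
    · refine List.isChain_cons_cons.2 ⟨hxaH, List.isChain_cons_cons.2 ⟨?_, List.isChain_cons_cons.2 ⟨?_, by simp⟩⟩⟩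
      · exact Hadj_off G x y a y hyaG.symm (Or.inl ⟨Ne.symm hxa, Ne.symm hxyne⟩)
      · exact Hadj_off G x y y b hbyG.symm (Or.inl ⟨Ne.symm hxyne, Ne.symm hxb⟩)
    · simp [List.nodup_cons, hxa, hxyne, hxb, hay, hab, Ne.symm hbyne]
    · intro v
      have := hcov v
      simp only [List.nil_append, List.mem_cons, List.not_mem_nil, or_false] at this ⊢
      tauto
    · simp
    · intro r hr q hq
      simp only [List.head?_cons, Option.mem_some_iff] at hr
      have hq' : b = q := by simpa using hq
      subst hr
      subst hq'
      exact Hadj_off G x y b x hxbG.symm (Or.inr ⟨hbyne, hxyne⟩)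
  have hn5 : 5 ≤ Fintype.card V := by
    have h1 : 1 ≤ m.length := List.length_pos_iff.2 hmne
    have h2 : (x :: a :: (m ++ [b, y])).length = m.length + 4 := by
      simp only [List.length_cons, List.length_append, List.length_nil]
    rw [← hplen, h2]
    omega
  -- the T part
  have hTadj : ∀ v, v ≠ x → v ≠ y → v ≠ a → v ≠ b →
      ∀ z, z ≠ v → z ≠ x → z ≠ y → G.Adj v z := by
    intro v hvx hvy hva hvb
    have hnadjx : ¬G.Adj v x := by
      intro h
      rcases coreX v h.symm with h1 | h1 | h1
      · exact hvy h1
      · exact hva h1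
      · exact hvb h1
    have hnadjy : ¬G.Adj v y := by
      intro h
      rcases coreY v h.symm with h1 | h1 | h1
      · exact hvx h1
      · exact hvb h1
      · exact hva h1
    have hore := hOre v x hvx hnadjx
    have hsat := satur G v ({x, y} : Set V) (by simp [hvx, hvy]) ?_ ?_
    · intro z hzv hzx hzy
      exact hsat z hzv (by simp [hzx, hzy])
    · intro f hf
      rcases hf with rfl | rfl
      · exact hnadjx
      · exact hnadjy
    · rw [Set.ncard_pair hxyne]
      omega
  set T : Finset V := Finset.univ \ {x, y, a, b} with hT
  have hTmem : ∀ v, v ∈ T ↔ (v ≠ x ∧ v ≠ y ∧ v ≠ a ∧ v ≠ b) := by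
    intro v
    rw [hT]
    simp only [Finset.mem_sdiff, Finset.mem_univ, true_and, Finset.mem_insert,
      Finset.mem_singleton]
    tauto
  have hcard4 : ({x, y, a, b} : Finset V).card = 4 := by
    rw [Finset.card_insert_of_notMem (by simp [hxyne, hxa, hxb]),
      Finset.card_insert_of_notMem (by simp [hay.symm, hbyne.symm]),
      Finset.card_insert_of_notMem (by simp [hab]), Finset.card_singleton]
  have hTcard : T.card = Fintype.card V - 4 := by
    rw [hT, Finset.card_sdiff_of_subset (Finset.subset_univ _), Finset.card_univ, hcard4]
  have hScard : ({x, y} : Finset V).card = 2 := by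
    rw [Finset.card_insert_of_notMem (by simp [hxyne]), Finset.card_singleton]
  refine ⟨a, b, {x, y}, T, hab, by simp [hxa.symm, hay], by simp [hTmem],
    by simp [hxb.symm, hbyne], by simp [hTmem], ?_, ?_, Or.inr hScard, by omega, ?_, ?_, ?_,
    ?_, ?_⟩
  · rw [Finset.disjoint_left]
    intro v hv
    rw [hTmem]
    simp only [Finset.mem_insert, Finset.mem_singleton] at hv
    rcases hv with rfl | rfl
    · intro hc; exact hc.1 rfl
    · intro hc; exact hc.2.1 rfl
  · ext z
    simp only [Finset.mem_insert, Finset.mem_union, Finset.mem_singleton, Finset.mem_univ,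
      iff_true]
    rcases eq_or_ne z a with rfl | h1
    · tauto
    rcases eq_or_ne z b with rfl | h2
    · tauto
    rcases eq_or_ne z x with rfl | h3
    · tauto
    rcases eq_or_ne z y with rfl | h4
    · tauto
    have : z ∈ T := (hTmem z).2 ⟨h3, h4, h1, h2⟩
    tauto
  · rw [hScard, hTcard]; omega
  · intro u hu v hv huv
    simp only [Finset.mem_insert, Finset.mem_singleton] at hu hv
    rcases hu with rfl | rfl <;> rcases hv with rfl | rfl
    · exact absurd rfl huv
    · exact hxy
    · exact hxy.symm
    · exact absurd rfl huv
  · intro u hu v hv huv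
    rw [hTmem] at hu hv
    exact hTadj u hu.1 hu.2.1 hu.2.2.1 hu.2.2.2 v (Ne.symm huv) hv.1 hv.2.1
  · intro u hu v hv
    simp only [Finset.mem_insert, Finset.mem_singleton] at hu
    rw [hTmem] at hv
    rcases hu with rfl | rfl
    · intro h
      rcases coreX v h with h1 | h1 | h1
      · exact hv.2.1 h1
      · exact hv.2.2.1 h1
      · exact hv.2.2.2 h1
    · intro h
      rcases coreY v h with h1 | h1 | h1
      · exact hv.1 h1
      · exact hv.2.2.2 h1
      · exact hv.2.2.1 h1
  · intro v hv
    simp only [Finset.mem_union, Finset.mem_insert, Finset.mem_singleton] at hv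
    rcases hv with (rfl | rfl) | hv
    · exact ⟨hxaG.symm, hxbG.symm⟩
    · exact ⟨hyaG.symm, hbyG⟩
    · rw [hTmem] at hv
      constructor
      · exact (hTadj v hv.1 hv.2.1 hv.2.2.1 hv.2.2.2 a (Ne.symm hv.2.2.1) hxa.symm hay).symm
      · exact (hTadj v hv.1 hv.2.1 hv.2.2.1 hv.2.2.2 b (Ne.symm hv.2.2.2) hxb.symm hbyne).symm

end OreFT


namespace OreFT
variable {V : Type*} [Fintype V] [DecidableEq V]

lemma fromRot (G : SimpleGraph V) (x y : V) (hn3 : 3 ≤ Fintype.card V)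
    (hxy : G.Adj x y) (HnH : ¬(G.deleteEdges {s(x, y)}).IsHamiltonian)
    (rest : List V) (hch : (x :: rest).IsChain G.Adj) (hnd : (x :: rest).Nodup)
    (hcov : ∀ v : V, v ∈ x :: rest)
    (hwrap : ∀ q ∈ (x :: rest).getLast?, G.Adj q x) :
    ∃ p : List V, p.IsChain (G.deleteEdges {s(x, y)}).Adj ∧ p.Nodup ∧ (∀ v : V, v ∈ p) ∧
      p.head? = some x ∧ p.getLast? = some y := by
  have hxyne : x ≠ y := hxy.ne
  have hxrest : x ∉ rest := (List.nodup_cons.1 hnd).1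
  have hndrest : rest.Nodup := (List.nodup_cons.1 hnd).2
  have hlen : (x :: rest).length = Fintype.card V := cover_length _ hnd hcov
  have hymem : y ∈ rest := by
    rcases List.mem_cons.1 (hcov y) with h | h
    · exact absurd h.symm hxyne
    · exact h
  obtain ⟨r1, r2, hr12⟩ := List.append_of_mem hymem
  have hndr := hr12 ▸ hndrest
  have hndr' := List.nodup_append.1 hndr
  have hyr1 : y ∉ r1 := fun h => hndr'.2.2 _ h _ (by simp) rfl
  have hyr2 : y ∉ r2 := by
    have := hndr'.2.1
    rw [List.nodup_cons] at this
    exact this.1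
  have hchrest : rest.IsChain G.Adj := (List.isChain_cons.1 hch).2
  have hchrestH : rest.IsChain (G.deleteEdges {s(x, y)}).Adj := by
    apply chainH_of_chainG G x y rest hchrest
    exact Or.inl (fun v hv he => hxrest (he ▸ hv))
  cases r1 with
  | nil =>
    -- rest = y :: r2 ; reroute:  p = reverse ((y :: r2) ++ [x])
    simp only [List.nil_append] at hr12
    subst hr12
    have hr2ne : r2 ≠ [] := by
      rintro rfl
      simp only [List.length_cons, List.length_nil] at hlen
      omega
    set w2 := r2.getLast hr2ne with hw2
    have hw2mem : w2 ∈ r2 := List.getLast_mem hr2ne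
    have hw2y : w2 ≠ y := fun h => hyr2 (h ▸ hw2mem)
    have hlastrest : (y :: r2).getLast? = some w2 := by
      rw [List.getLast?_eq_getLast (by simp), List.getLast_cons hr2ne]
    have hGw2x : G.Adj w2 x := by
      apply hwrap w2
      rw [show (x :: y :: r2 : List V) = [x] ++ (y :: r2) by simp,
        List.getLast?_append_of_ne_nil _ (by simp)]
      exact hlastrest
    set p' := (y :: r2) ++ [x] with hp'
    have hp'ch : p'.IsChain (G.deleteEdges {s(x, y)}).Adj := by
      rw [hp', List.isChain_append]
      refine ⟨hchrestH, by simp, ?_⟩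
      intro q hq q' hq'
      rw [hlastrest] at hq
      simp only [List.head?_cons, Option.mem_some_iff] at hq hq'
      subst hq hq'
      exact Hadj_off G x y w2 x hGw2x (Or.inr ⟨hw2y, hxyne⟩)
    have hp'perm : p' ~ x :: y :: r2 := by
      rw [hp']
      exact List.perm_append_comm
    refine ⟨p'.reverse, ?_, ?_, ?_, ?_, ?_⟩
    · rw [List.isChain_reverse]
      exact hp'ch.imp (fun u v h => h.symm)
    · exact List.nodup_reverse.2 (hp'perm.nodup_iff.2 hnd)
    · intro v
      rw [List.mem_reverse]
      exact hp'perm.mem_iff.2 (hcov v)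
    · rw [List.head?_reverse, hp', List.getLast?_concat]
    · rw [List.getLast?_reverse, hp', List.head?_append_of_ne_nil _ (by simp), List.head?_cons]
  | cons d r1' =>
    -- rest = (d :: r1') ++ y :: r2
    have hdy : d ≠ y := fun h => hyr1 (by simp [h])
    have hxd : (G.deleteEdges {s(x, y)}).Adj x d := by
      have hGxd : G.Adj x d := by
        have := (List.isChain_cons.1 hch).1 d (by rw [hr12]; simp)
        exact this
      exact Hadj_off G x y x d hGxd (Or.inr ⟨hxyne, hdy⟩)
    have hfullch : (x :: rest).IsChain (G.deleteEdges {s(x, y)}).Adj := by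
      rw [List.isChain_cons]
      refine ⟨?_, hchrestH⟩
      intro z hz
      rw [hr12] at hz
      simp only [List.cons_append, List.head?_cons, Option.mem_some_iff] at hz
      subst hz
      exact hxd
    cases r2 with
    | nil =>
      -- rest = r1 ++ [y] : the path is x :: rest itself
      refine ⟨x :: rest, hfullch, hnd, hcov, by simp, ?_⟩
      rw [hr12]
      rw [show (x :: ((d :: r1') ++ y :: [] : List V)) = (x :: d :: r1') ++ [y] by simp,
        List.getLast?_concat]
    | cons e r2' =>
      -- contradiction: x :: rest is a hamiltonian cycle of H
      exfalso
      apply HnH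
      apply isHam_of_list _ (x :: rest) hfullch hnd hcov (by rw [hlen]; exact hn3)
      intro q hq q' hq'
      simp only [List.head?_cons, Option.mem_some_iff] at hq
      subst hq
      have hlast2 : (x :: rest).getLast? = (e :: r2').getLast? := by
        rw [hr12, show (x :: ((d :: r1') ++ y :: e :: r2') : List V)
            = (x :: d :: r1' ++ [y]) ++ (e :: r2') by simp,
          List.getLast?_append_of_ne_nil _ (by simp)]
      set w2 := (e :: r2').getLast (by simp) with hw2def
      have hw2some : (e :: r2').getLast? = some w2 := List.getLast?_eq_getLast (by simp)
      have hq'w2 : w2 = q' := by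
        rw [hlast2, hw2some] at hq'
        simpa using hq'
      subst hq'w2
      rename_i hq'
      have hw2mem : w2 ∈ e :: r2' := hw2def ▸ List.getLast_mem (by simp)
      have hw2y : w2 ≠ y := fun h => hyr2 (h ▸ hw2mem)
      have hGw2x : G.Adj w2 x := by
        apply hwrap w2
        rw [hlast2]
        exact hw2some
      exact Hadj_off G x y w2 x hGw2x (Or.inr ⟨hw2y, hxyne⟩)

lemma pathFromCyc (G : SimpleGraph V) (x y : V) (hn3 : 3 ≤ Fintype.card V)
    (hxy : G.Adj x y) (HnH : ¬(G.deleteEdges {s(x, y)}).IsHamiltonian)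
    (c : List V) (hch : c.IsChain G.Adj) (hnd : c.Nodup) (hcov : ∀ v : V, v ∈ c)
    (hwrap : ∀ p ∈ c.head?, ∀ q ∈ c.getLast?, G.Adj q p) :
    ∃ p : List V, p.IsChain (G.deleteEdges {s(x, y)}).Adj ∧ p.Nodup ∧ (∀ v : V, v ∈ p) ∧
      p.head? = some x ∧ p.getLast? = some y := by
  obtain ⟨c1, c2, rfl⟩ := List.append_of_mem (hcov x)
  have hsplit := List.isChain_append.1 hch
  cases c1 with
  | nil =>
    apply fromRot G x y hn3 hxy HnH c2 (by simpa using hch) (by simpa using hnd)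
      (fun v => by simpa using hcov v)
    intro q hq
    refine hwrap x (by simp) q (by simpa using hq)
  | cons d c1' =>
    set c1 := d :: c1' with hc1
    have hc1ne : c1 ≠ [] := by simp [hc1]
    set rest := c2 ++ c1 with hrest
    have hrotperm : (x :: rest) ~ c1 ++ x :: c2 := by
      rw [hrest, show (x :: (c2 ++ c1) : List V) = (x :: c2) ++ c1 by simp]
      exact List.perm_append_comm
    apply fromRot G x y hn3 hxy HnH rest ?_ (hrotperm.nodup_iff.2 hnd)
      (fun v => hrotperm.mem_iff.2 (hcov v)) ?_
    · rw [hrest, show (x :: (c2 ++ c1) : List V) = (x :: c2) ++ c1 by simp, List.isChain_append]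
      refine ⟨hsplit.2.1, hsplit.1, ?_⟩
      intro p hp q hq
      refine hwrap q ?_ p ?_
      · rw [List.head?_append_of_ne_nil _ hc1ne]
        exact hq
      · rw [List.getLast?_append_of_ne_nil _ (by simp)]
        exact hp
    · intro q hq
      rw [hrest, show (x :: (c2 ++ c1) : List V) = (x :: c2) ++ c1 by simp,
        List.getLast?_append_of_ne_nil _ hc1ne] at hq
      exact (hsplit.2.2 q hq x (by simp))

end OreFT

/-- Any graph on `n ≥ 3` vertices satisfying Ore's condition is
1-edge-fault hamiltonian, unless it is `K₃` or of the form `H₂ ∨ (K_s + K_t)` with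
`s ∈ {1, 2}`. -/
theorem statement_1 {V : Type*} [Fintype V] [DecidableEq V] (G : SimpleGraph V)
    (n : ℕ) (hn : n = Fintype.card V) (hn3 : 3 ≤ n)
    (hOre : ∀ u v : V, u ≠ v → ¬G.Adj u v → n ≤ deg G u + deg G v) :
    (∀ u v : V, G.Adj u v → (G.deleteEdges {s(u, v)}).IsHamiltonian) ∨
    Nonempty (G ≃g (⊤ : SimpleGraph (Fin 3))) ∨
    (∃ (a b : V) (S T : Finset V),
      a ≠ b ∧ a ∉ S ∧ a ∉ T ∧ b ∉ S ∧ b ∉ T ∧ Disjoint S T ∧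
      insert a (insert b (S ∪ T)) = (Finset.univ : Finset V) ∧
      (S.card = 1 ∨ S.card = 2) ∧ 1 ≤ T.card ∧ S.card + T.card = n - 2 ∧
      (∀ u ∈ S, ∀ v ∈ S, u ≠ v → G.Adj u v) ∧
      (∀ u ∈ T, ∀ v ∈ T, u ≠ v → G.Adj u v) ∧
      (∀ u ∈ S, ∀ v ∈ T, ¬G.Adj u v) ∧
      (∀ v ∈ S ∪ T, G.Adj a v ∧ G.Adj b v)) := by
  classical
  subst hn
  by_cases hham : ∀ u v : V, G.Adj u v → (G.deleteEdges {s(u, v)}).IsHamiltonian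
  · exact Or.inl hham
  rcases eq_or_lt_of_le hn3 with h3 | h4
  · -- n = 3 : G is complete
    refine Or.inr (Or.inl ?_)
    have hdegb : ∀ u v : V, u ≠ v → ¬G.Adj u v → deg G u ≤ Fintype.card V - 2 := by
      intro u v huv hnadj
      have hsub : G.neighborSet u ⊆ ({u, v} : Set V)ᶜ := by
        intro z hz
        simp only [Set.mem_compl_iff, Set.mem_insert_iff, Set.mem_singleton_iff]
        push_neg
        constructor
        · intro h; exact G.loopless.irrefl u (h ▸ hz)
        · intro h; exact hnadj (h ▸ hz)
      have hcompl : (({u, v} : Set V)ᶜ).ncard = Fintype.card V - 2 := by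
        have h0 : (({u, v} : Set V)ᶜ) = Set.univ \ {u, v} := by rw [Set.compl_eq_univ_diff]
        rw [h0, Set.ncard_diff (Set.subset_univ _) (Set.toFinite _), Set.ncard_univ,
          Nat.card_eq_fintype_card, Set.ncard_pair huv]
      calc deg G u ≤ (({u, v} : Set V)ᶜ).ncard := Set.ncard_le_ncard hsub (Set.toFinite _)
        _ = Fintype.card V - 2 := hcompl
    have hcomplete : ∀ u v : V, u ≠ v → G.Adj u v := by
      intro u v huv
      by_contra hnadj
      have h1 := hOre u v huv hnadj
      have h2 := hdegb u v huv hnadj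
      have h3' := hdegb v u (Ne.symm huv) (fun h => hnadj h.symm)
      omega
    have e : V ≃ Fin 3 := Fintype.equivFinOfCardEq h3.symm
    refine ⟨⟨e, ?_⟩⟩
    intro u v
    simp only [top_adj]
    constructor
    · intro h
      exact hcomplete u v (fun he => h (congrArg e he))
    · intro h he
      exact h.ne (e.injective he)
  · -- n ≥ 4
    right; right
    push_neg at hham
    obtain ⟨x, y, hxy, HnH⟩ := hham
    obtain ⟨c, hc1, hc2, hc3, hc4⟩ := OreFT.ore_cycle G (by omega) hOre
    obtain ⟨p, hp1, hp2, hp3, hp4, hp5⟩ :=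
      OreFT.pathFromCyc G x y (by omega) hxy HnH c hc1 hc2 hc3 hc4
    have hEx := OreFT.main_struct G x y (by omega) hOre hxy HnH p hp1 hp2 hp3 hp4 hp5
    exact hEx
end

section
/- Let n be even with n ≥ 8. Let A be a simple graph on n/2 vertices consisting of an arbitrary graph H on (n−4)/2 vertices together with two additional adjacent vertices x and y and an arbitrary set of edges between {x, y} and V(H). Let B = K̄_{(n−4)/2} ∪ K₂, where the K₂ has vertices u₁, u₂, and let G = A ∨ B. Let RE = {(x,u₁), (x,u₂), (y,u₁), (y,u₂)}. Then: (a) the minimum of deg_G(u) + deg_G(v) over distinct nonadjacent pairs of G equals n; and (b) if G' is obtained from G by deleting either one edge of RE or two vertex-disjoint edges of RE, then the minimum degree of G' equals n/2 and the minimum of deg_{G'}(u) + deg_{G'}(v) over distinct nonadjacent pairs of G' equals n. -/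
open SimpleGraph

set_option linter.unusedVariables false

/-- `minDegEq G d` : the minimum degree of `G` equals `d`. -/
def minDegEq {α : Type*} (G : SimpleGraph α) (d : ℕ) : Prop :=
  (∀ v, d ≤ deg G v) ∧ (∃ v, deg G v = d)

/-- `minSigmaEq G c` : the minimum of `deg u + deg v` over distinct nonadjacent pairs
`u, v` of `G` equals `c`. -/
def minSigmaEq {α : Type*} (G : SimpleGraph α) (c : ℕ) : Prop :=
  (∀ u v, u ≠ v → ¬G.Adj u v → c ≤ deg G u + deg G v) ∧
  (∃ u v, u ≠ v ∧ ¬G.Adj u v ∧ deg G u + deg G v = c)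

section Helpers
open Sum

@[simp] lemma gJoin_adj_ll {α β} (G : SimpleGraph α) (H : SimpleGraph β) (a b : α) :
    (gJoin G H).Adj (inl a) (inl b) ↔ G.Adj a b := Iff.rfl
@[simp] lemma gJoin_adj_rr {α β} (G : SimpleGraph α) (H : SimpleGraph β) (a b : β) :
    (gJoin G H).Adj (inr a) (inr b) ↔ H.Adj a b := Iff.rfl
@[simp] lemma gJoin_adj_lr {α β} (G : SimpleGraph α) (H : SimpleGraph β) (a : α) (b : β) :
    (gJoin G H).Adj (inl a) (inr b) := trivial
@[simp] lemma gJoin_adj_rl {α β} (G : SimpleGraph α) (H : SimpleGraph β) (a : β) (b : α) :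
    (gJoin G H).Adj (inr a) (inl b) := trivial

lemma ns_gJoin_left {α β} (G : SimpleGraph α) (H : SimpleGraph β) (a : α) :
    (gJoin G H).neighborSet (inl a) = Sum.inl '' G.neighborSet a ∪ Set.range Sum.inr := by
  ext (b | b) <;> simp [mem_neighborSet]

lemma ns_gJoin_right {α β} (G : SimpleGraph α) (H : SimpleGraph β) (b : β) :
    (gJoin G H).neighborSet (inr b) = Set.range Sum.inl ∪ Sum.inr '' H.neighborSet b := by
  ext (a | a) <;> simp [mem_neighborSet]

lemma deg_gJoin_left {α β} [Fintype α] [Fintype β] (G : SimpleGraph α) (H : SimpleGraph β)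
    (a : α) : deg (gJoin G H) (inl a) = deg G a + Fintype.card β := by
  rw [deg, ns_gJoin_left, Set.ncard_union_eq, Set.ncard_image_of_injective _ Sum.inl_injective,
    ← Set.image_univ, Set.ncard_image_of_injective _ Sum.inr_injective, Set.ncard_univ,
    Nat.card_eq_fintype_card, deg]
  · simp [Set.disjoint_left]

lemma deg_gJoin_right {α β} [Fintype α] [Fintype β] (G : SimpleGraph α) (H : SimpleGraph β)
    (b : β) : deg (gJoin G H) (inr b) = Fintype.card α + deg H b := by
  rw [deg, ns_gJoin_right, Set.ncard_union_eq, Set.ncard_image_of_injective _ Sum.inr_injective,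
    ← Set.image_univ, Set.ncard_image_of_injective _ Sum.inl_injective, Set.ncard_univ,
    Nat.card_eq_fintype_card, deg]
  · simp [Set.disjoint_left]

lemma degB_isolated (m : ℕ) (b : Fin m) :
    deg ((⊥ : SimpleGraph (Fin m)) ⊕g (⊤ : SimpleGraph (Fin 2))) (inl b) = 0 := by
  have : ((⊥ : SimpleGraph (Fin m)) ⊕g (⊤ : SimpleGraph (Fin 2))).neighborSet (inl b) = ∅ := by
    ext (x | x) <;> simp [mem_neighborSet]
  rw [deg, this, Set.ncard_empty]

lemma degB_k2 (m : ℕ) (j : Fin 2) :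
    deg ((⊥ : SimpleGraph (Fin m)) ⊕g (⊤ : SimpleGraph (Fin 2))) (inr j) = 1 := by
  have : ((⊥ : SimpleGraph (Fin m)) ⊕g (⊤ : SimpleGraph (Fin 2))).neighborSet (inr j)
      = {inr (j + 1)} := by
    ext (x | x) <;> simp [mem_neighborSet]
    revert j x; decide
  rw [deg, this, Set.ncard_singleton]

variable {V : Type*} (G : SimpleGraph V)

lemma ns_del1_other {x y v : V} (h1 : v ≠ x) (h2 : v ≠ y) :
    (G.deleteEdges {s(x, y)}).neighborSet v = G.neighborSet v := by
  ext w
  simp only [mem_neighborSet, deleteEdges_adj, Set.mem_singleton_iff, Sym2.eq, Sym2.rel_iff',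
    Prod.mk.injEq, Prod.swap_prod_mk]
  tauto

lemma deg_del1_other {x y v : V} (h1 : v ≠ x) (h2 : v ≠ y) :
    deg (G.deleteEdges {s(x, y)}) v = deg G v := by
  rw [deg, ns_del1_other G h1 h2]; rfl

lemma ns_del1_left {x y : V} (hne : x ≠ y) :
    (G.deleteEdges {s(x, y)}).neighborSet x = G.neighborSet x \ {y} := by
  ext w
  simp only [mem_neighborSet, deleteEdges_adj, Set.mem_singleton_iff, Sym2.eq, Sym2.rel_iff',
    Prod.mk.injEq, Prod.swap_prod_mk, Set.mem_diff]
  tauto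

lemma deg_del1_left [Fintype V] {x y : V} (hadj : G.Adj x y) :
    deg (G.deleteEdges {s(x, y)}) x = deg G x - 1 := by
  rw [deg, ns_del1_left G hadj.ne,
    Set.ncard_diff_singleton_of_mem ((G.mem_neighborSet x y).2 hadj), deg]

lemma deg_del1_right [Fintype V] {x y : V} (hadj : G.Adj x y) :
    deg (G.deleteEdges {s(x, y)}) y = deg G y - 1 := by
  have h : s(x, y) = s(y, x) := Sym2.eq_swap
  rw [h]
  exact deg_del1_left G hadj.symm

lemma delete_pair (e₁ e₂ : Sym2 V) :
    G.deleteEdges {e₁, e₂} = (G.deleteEdges {e₁}).deleteEdges {e₂} := by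
  ext u v
  simp only [deleteEdges_adj, Set.mem_insert_iff, Set.mem_singleton_iff]
  tauto

end Helpers


open Sum in
lemma key_statement_10 (m n : ℕ) (hm2 : 2 ≤ m) (hn : n = 2 * m + 4)
    (A : SimpleGraph (Fin m ⊕ Fin 2)) (hxy : A.Adj (Sum.inr 0) (Sum.inr 1))
    (G : SimpleGraph ((Fin m ⊕ Fin 2) ⊕ (Fin m ⊕ Fin 2)))
    (hG : G = gJoin A ((⊥ : SimpleGraph (Fin m)) ⊕g (⊤ : SimpleGraph (Fin 2)))) :
    minSigmaEq G n ∧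
    (∀ i j : Fin 2,
      minDegEq (G.deleteEdges {s(Sum.inl (Sum.inr i), Sum.inr (Sum.inr j))}) (n / 2) ∧
      minSigmaEq (G.deleteEdges {s(Sum.inl (Sum.inr i), Sum.inr (Sum.inr j))}) n) ∧
    (∀ i₁ j₁ i₂ j₂ : Fin 2, i₁ ≠ i₂ → j₁ ≠ j₂ →
      minDegEq (G.deleteEdges
        {s(Sum.inl (Sum.inr i₁), Sum.inr (Sum.inr j₁)),
         s(Sum.inl (Sum.inr i₂), Sum.inr (Sum.inr j₂))}) (n / 2) ∧
      minSigmaEq (G.deleteEdges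
        {s(Sum.inl (Sum.inr i₁), Sum.inr (Sum.inr j₁)),
         s(Sum.inl (Sum.inr i₂), Sum.inr (Sum.inr j₂))}) n) := by
  subst hG
  set B := ((⊥ : SimpleGraph (Fin m)) ⊕g (⊤ : SimpleGraph (Fin 2))) with hB
  have cardβ : Fintype.card (Fin m ⊕ Fin 2) = m + 2 := by simp
  have degl : ∀ a, deg (gJoin A B) (Sum.inl a) = deg A a + (m + 2) := by
    intro a; rw [deg_gJoin_left, cardβ]
  have degr1 : ∀ b : Fin m, deg (gJoin A B) (Sum.inr (Sum.inl b)) = m + 2 := by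
    intro b; rw [deg_gJoin_right, cardβ, hB, degB_isolated]
  have degr2 : ∀ j : Fin 2, deg (gJoin A B) (Sum.inr (Sum.inr j)) = m + 3 := by
    intro j; rw [deg_gJoin_right, cardβ, hB, degB_k2]
  have degall : ∀ v, m + 2 ≤ deg (gJoin A B) v := by
    rintro ((a | i) | (b | j))
    · rw [degl]; omega
    · rw [degl]; omega
    · rw [degr1]
    · rw [degr2]; omega
  have hA1 : ∀ i : Fin 2, 1 ≤ deg A (Sum.inr i) := by
    intro i
    have hne : (A.neighborSet (Sum.inr i)).Nonempty := by
      fin_cases i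
      exacts [⟨Sum.inr 1, hxy⟩, ⟨Sum.inr 0, hxy.symm⟩]
    exact (Set.ncard_pos (Set.toFinite _)).2 hne
  refine ⟨?_, ?_, ?_⟩
  · -- part (a)
    constructor
    · intro u v hne hnadj
      have h1 := degall u
      have h2 := degall v
      omega
    · refine ⟨Sum.inr (Sum.inl ⟨0, by omega⟩), Sum.inr (Sum.inl ⟨1, by omega⟩),
        by simp, by simp [hB], ?_⟩
      rw [degr1, degr1]; omega
  · -- part (b): delete one edge
    intro i j
    have hadj : (gJoin A B).Adj (Sum.inl (Sum.inr i)) (Sum.inr (Sum.inr j)) := trivial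
    have e1 : deg ((gJoin A B).deleteEdges {s(Sum.inl (Sum.inr i), Sum.inr (Sum.inr j))})
        (Sum.inl (Sum.inr i)) = deg A (Sum.inr i) + (m + 2) - 1 := by
      rw [deg_del1_left _ hadj, degl]
    have e2 : deg ((gJoin A B).deleteEdges {s(Sum.inl (Sum.inr i), Sum.inr (Sum.inr j))})
        (Sum.inr (Sum.inr j)) = m + 2 := by
      rw [deg_del1_right _ hadj, degr2]
      omega
    have eo : ∀ v, v ≠ Sum.inl (Sum.inr i) → v ≠ Sum.inr (Sum.inr j) →
        deg ((gJoin A B).deleteEdges {s(Sum.inl (Sum.inr i), Sum.inr (Sum.inr j))}) v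
          = deg (gJoin A B) v := by
      intro v h1 h2; rw [deg_del1_other _ h1 h2]
    have hlow : ∀ v, m + 2 ≤
        deg ((gJoin A B).deleteEdges {s(Sum.inl (Sum.inr i), Sum.inr (Sum.inr j))}) v := by
      rintro ((a | i') | (b | j'))
      · rw [eo _ (by simp) (by simp), degl]; omega
      · by_cases h : i' = i
        · subst h; have := hA1 i'; omega
        · rw [eo _ (by simp [h]) (by simp), degl]; omega
      · rw [eo _ (by simp) (by simp), degr1]
      · by_cases h : j' = j
        · subst h; omega
        · rw [eo _ (by simp) (by simp [h]), degr2]; omega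
    refine ⟨⟨fun v => by have := hlow v; omega, ⟨Sum.inr (Sum.inr j), by omega⟩⟩, ?_, ?_⟩
    · intro u v hne hnadj
      have h1 := hlow u
      have h2 := hlow v
      omega
    · refine ⟨Sum.inr (Sum.inl ⟨0, by omega⟩), Sum.inr (Sum.inl ⟨1, by omega⟩),
        by simp, by simp [hB], ?_⟩
      rw [eo (Sum.inr (Sum.inl ⟨0, by omega⟩)) (by simp) (by simp),
        eo (Sum.inr (Sum.inl ⟨1, by omega⟩)) (by simp) (by simp), degr1, degr1]
      omega
  · -- part (c): delete two vertex-disjoint edges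
    intro i₁ j₁ i₂ j₂ hi hj
    rw [delete_pair]
    have hadj1 : (gJoin A B).Adj (Sum.inl (Sum.inr i₁)) (Sum.inr (Sum.inr j₁)) := trivial
    have hadj2 : ((gJoin A B).deleteEdges {s(Sum.inl (Sum.inr i₁), Sum.inr (Sum.inr j₁))}).Adj
        (Sum.inl (Sum.inr i₂)) (Sum.inr (Sum.inr j₂)) := by
      rw [deleteEdges_adj]
      refine ⟨trivial, ?_⟩
      intro hmem
      rw [Set.mem_singleton_iff, Sym2.eq_iff] at hmem
      rcases hmem with ⟨h1, h2⟩ | ⟨h1, h2⟩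
      · simp only [Sum.inl.injEq, Sum.inr.injEq] at h1
        exact hi h1.symm
      · simp at h1
    set G₁ := (gJoin A B).deleteEdges {s(Sum.inl (Sum.inr i₁), Sum.inr (Sum.inr j₁))} with hG₁
    set G₂ := G₁.deleteEdges {s(Sum.inl (Sum.inr i₂), Sum.inr (Sum.inr j₂))} with hG₂
    have eo1 : ∀ v, v ≠ Sum.inl (Sum.inr i₁) → v ≠ Sum.inr (Sum.inr j₁) →
        deg G₁ v = deg (gJoin A B) v := by
      intro v h1 h2; rw [hG₁, deg_del1_other _ h1 h2]
    have eo2 : ∀ v, v ≠ Sum.inl (Sum.inr i₂) → v ≠ Sum.inr (Sum.inr j₂) →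
        deg G₂ v = deg G₁ v := by
      intro v h1 h2; rw [hG₂, deg_del1_other _ h1 h2]
    have e11 : deg G₂ (Sum.inl (Sum.inr i₁)) = deg A (Sum.inr i₁) + (m + 2) - 1 := by
      rw [eo2 _ (by simp [hi]) (by simp), hG₁, deg_del1_left _ hadj1, degl]
    have e12 : deg G₂ (Sum.inl (Sum.inr i₂)) = deg A (Sum.inr i₂) + (m + 2) - 1 := by
      rw [hG₂, deg_del1_left _ hadj2, eo1 _ (by simp [hi.symm]) (by simp), degl]
    have e21 : deg G₂ (Sum.inr (Sum.inr j₁)) = m + 2 := by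
      rw [eo2 _ (by simp) (by simp [hj]), hG₁, deg_del1_right _ hadj1, degr2]
      omega
    have e22 : deg G₂ (Sum.inr (Sum.inr j₂)) = m + 2 := by
      rw [hG₂, deg_del1_right _ hadj2, eo1 _ (by simp) (by simp [hj.symm]), degr2]
      omega
    have hlow : ∀ v, m + 2 ≤ deg G₂ v := by
      rintro ((a | i') | (b | j'))
      · rw [eo2 _ (by simp) (by simp), eo1 _ (by simp) (by simp), degl]; omega
      · by_cases h1 : i' = i₁
        · subst h1; have := hA1 i'; omega
        · by_cases h2 : i' = i₂
          · subst h2; have := hA1 i'; omega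
          · rw [eo2 _ (by simp [h2]) (by simp), eo1 _ (by simp [h1]) (by simp), degl]; omega
      · rw [eo2 _ (by simp) (by simp), eo1 _ (by simp) (by simp), degr1]
      · by_cases h1 : j' = j₁
        · subst h1; omega
        · by_cases h2 : j' = j₂
          · subst h2; omega
          · rw [eo2 _ (by simp) (by simp [h2]), eo1 _ (by simp) (by simp [h1]), degr2]; omega
    refine ⟨⟨fun v => by have := hlow v; omega, ⟨Sum.inr (Sum.inr j₁), by omega⟩⟩, ?_, ?_⟩
    · intro u v hne hnadj
      have h1 := hlow u
      have h2 := hlow v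
      omega
    · refine ⟨Sum.inr (Sum.inl ⟨0, by omega⟩), Sum.inr (Sum.inl ⟨1, by omega⟩),
        by simp, by simp [hG₂, hG₁, hB], ?_⟩
      rw [eo2 (Sum.inr (Sum.inl ⟨0, by omega⟩)) (by simp) (by simp),
        eo1 (Sum.inr (Sum.inl ⟨0, by omega⟩)) (by simp) (by simp),
        eo2 (Sum.inr (Sum.inl ⟨1, by omega⟩)) (by simp) (by simp),
        eo1 (Sum.inr (Sum.inl ⟨1, by omega⟩)) (by simp) (by simp), degr1, degr1]
      omega

/-- For `G = η₄ = (H : K₂) ∨ (K̄_{(n−4)/2} ∪ K₂)` (with `x = inr 0`,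
`y = inr 1` the `K₂`-vertices on the left and `u₁ = inr 0`, `u₂ = inr 1` those on the right):
the minimum degree-sum over nonadjacent pairs equals `n`, and after deleting one edge of
`RE`, or two vertex-disjoint edges of `RE`, the minimum degree equals `n/2` and the minimum
degree-sum over nonadjacent pairs equals `n`. -/
theorem statement_10 (n : ℕ) (heven : Even n) (hn8 : 8 ≤ n)
    (A : SimpleGraph (Fin ((n - 4) / 2) ⊕ Fin 2)) (hxy : A.Adj (Sum.inr 0) (Sum.inr 1))
    (G : SimpleGraph ((Fin ((n - 4) / 2) ⊕ Fin 2) ⊕ (Fin ((n - 4) / 2) ⊕ Fin 2)))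
    (hG : G = gJoin A ((⊥ : SimpleGraph (Fin ((n - 4) / 2))) ⊕g (⊤ : SimpleGraph (Fin 2)))) :
    minSigmaEq G n ∧
    (∀ i j : Fin 2,
      minDegEq (G.deleteEdges {s(Sum.inl (Sum.inr i), Sum.inr (Sum.inr j))}) (n / 2) ∧
      minSigmaEq (G.deleteEdges {s(Sum.inl (Sum.inr i), Sum.inr (Sum.inr j))}) n) ∧
    (∀ i₁ j₁ i₂ j₂ : Fin 2, i₁ ≠ i₂ → j₁ ≠ j₂ →
      minDegEq (G.deleteEdges
        {s(Sum.inl (Sum.inr i₁), Sum.inr (Sum.inr j₁)),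
         s(Sum.inl (Sum.inr i₂), Sum.inr (Sum.inr j₂))}) (n / 2) ∧
      minSigmaEq (G.deleteEdges
        {s(Sum.inl (Sum.inr i₁), Sum.inr (Sum.inr j₁)),
         s(Sum.inl (Sum.inr i₂), Sum.inr (Sum.inr j₂))}) n) := by
  obtain ⟨k, hk⟩ := heven
  exact key_statement_10 ((n - 4) / 2) n (by omega) (by omega) A hxy G hG
end
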